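/- arXiv:0912.2534 — 2 statements merged into one kernel-verified Lean document; each statement's English description precedes it below -/
import Mathlib

section
/- With A, C, S, R as in the CSR construction (λ(A) = 1) and P^(t) := C ⊗ S^t ⊗ R: for every critical node i ∈ N_c and every t ≥ 0, the i-th row of P^(t) equals the i-th row of S^t ⊗ R, and the i-th column of P^(t) equals the i-th column of C ⊗ S^t. -/
open scoped NNReal Classical

namespace MaxAlg

/-- Max-times matrix product over `ℝ≥0`. -/
noncomputable def mmul {n : ℕ} (A B : Fin n → Fin n → ℝ≥0) : Fin n → Fin n → ℝ≥0 :=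
  fun i j => Finset.univ.sup fun k => A i k * B k j

/-- Max-algebraic powers of a matrix, with `mpow A 0` the identity. -/
noncomputable def mpow {n : ℕ} (A : Fin n → Fin n → ℝ≥0) : ℕ → (Fin n → Fin n → ℝ≥0)
  | 0 => fun i j => if i = j then 1 else 0
  | (k+1) => mmul A (mpow A k)

/-- Weight of a walk `p` of length `k` (product of the edge weights). -/
noncomputable def pathWeight {n : ℕ} (A : Fin n → Fin n → ℝ≥0) (k : ℕ)
    (p : Fin (k+1) → Fin n) : ℝ≥0 :=
  ∏ t : Fin k, A (p t.castSucc) (p t.succ)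

/-- `p` is a walk in the edge relation `E`. -/
def IsEPath {n : ℕ} (E : Fin n → Fin n → Prop) (k : ℕ) (p : Fin (k+1) → Fin n) : Prop :=
  ∀ t : Fin k, E (p t.castSucc) (p t.succ)

/-- `j` is reachable from `i` in `E` (possibly by the empty path). -/
def Reach {n : ℕ} (E : Fin n → Fin n → Prop) (i j : Fin n) : Prop :=
  ∃ k, ∃ p : Fin (k+1) → Fin n, IsEPath E k p ∧ p 0 = i ∧ p (Fin.last k) = j

/-- Edge relation of the digraph associated with a nonnegative matrix. -/
def edges {n : ℕ} (A : Fin n → Fin n → ℝ≥0) (i j : Fin n) : Prop := A i j ≠ 0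

/-- Lengths of (positive-length) closed walks through `i` in `E`. -/
def cycLen {n : ℕ} (E : Fin n → Fin n → Prop) (i : Fin n) : Set ℕ :=
  {k | 0 < k ∧ ∃ p : Fin (k+1) → Fin n, IsEPath E k p ∧ p 0 = i ∧ p (Fin.last k) = i}

/-- Lengths of all closed walks in `E`. -/
def allCycLen {n : ℕ} (E : Fin n → Fin n → Prop) : Set ℕ :=
  {k | ∃ i, k ∈ cycLen E i}

/-- The gcd of a set of naturals, characterized by the gcd property. -/
noncomputable def setGcd (S : Set ℕ) : ℕ :=
  sInf {d | (∀ s ∈ S, d ∣ s) ∧ ∀ e : ℕ, (∀ s ∈ S, e ∣ s) → e ∣ d}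

/-- Cyclicity of a (completely reducible) digraph: lcm over the nodes of the
gcd of the cycle lengths through that node. -/
noncomputable def graphCyc {n : ℕ} (E : Fin n → Fin n → Prop) : ℕ :=
  Finset.univ.lcm fun i => if (cycLen E i).Nonempty then setGcd (cycLen E i) else 1

/-- The maximum cycle geometric mean `λ(A)`. -/
noncomputable def mcgm {n : ℕ} (A : Fin n → Fin n → ℝ≥0) : ℝ≥0 :=
  sSup {x | ∃ k : ℕ, 0 < k ∧ k ≤ n ∧ ∃ p : Fin (k+1) → Fin n,
    p 0 = p (Fin.last k) ∧ x = pathWeight A k p ^ ((1 : ℝ) / (k : ℝ))}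

/-- The Kleene star `A* = I ⊕ A ⊕ A² ⊕ ⋯` (entrywise supremum of all powers). -/
noncomputable def kleeneStar {n : ℕ} (A : Fin n → Fin n → ℝ≥0) : Fin n → Fin n → ℝ≥0 :=
  fun i j => ⨆ k : ℕ, mpow A k i j

/-- `(i,j)` is a critical edge: it lies on a cycle attaining `λ(A)`. -/
def IsCriticalEdge {n : ℕ} (A : Fin n → Fin n → ℝ≥0) (i j : Fin n) : Prop :=
  ∃ k : ℕ, 0 < k ∧ k ≤ n ∧ ∃ p : Fin (k+1) → Fin n, p 0 = p (Fin.last k) ∧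
    pathWeight A k p ^ ((1 : ℝ) / (k : ℝ)) = mcgm A ∧
    ∃ t : Fin k, p t.castSucc = i ∧ p t.succ = j

/-- A node lying on a critical cycle of `A`. -/
def IsCriticalNode {n : ℕ} (A : Fin n → Fin n → ℝ≥0) (i : Fin n) : Prop :=
  (∃ j, IsCriticalEdge A i j) ∨ (∃ j, IsCriticalEdge A j i)

/-- A completely reducible subgraph of the critical graph of `A`:
every edge is critical, and every edge can be completed to a cycle of the
subgraph (so each weakly connected part is strongly connected). -/
structure CritSubgraph {n : ℕ} (A : Fin n → Fin n → ℝ≥0) where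
  E : Fin n → Fin n → Prop
  critical : ∀ i j, E i j → IsCriticalEdge A i j
  reducible : ∀ i j, E i j → ∃ k, ∃ p : Fin (k+1) → Fin n,
    IsEPath E k p ∧ p 0 = j ∧ p (Fin.last k) = i

/-- Node set `N_c` of the subgraph. -/
def CritSubgraph.Nc {n : ℕ} {A : Fin n → Fin n → ℝ≥0} (G : CritSubgraph A) (i : Fin n) : Prop :=
  (∃ j, G.E i j) ∨ (∃ j, G.E j i)

/-- The matrix `C`: columns of `(A^γ)*` with indices in `N_c`, other columns zero. -/
noncomputable def Cmat {n : ℕ} (A : Fin n → Fin n → ℝ≥0) (G : CritSubgraph A) :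
    Fin n → Fin n → ℝ≥0 :=
  fun i j => if G.Nc j then kleeneStar (mpow A (graphCyc G.E)) i j else 0

/-- The matrix `R`: rows of `(A^γ)*` with indices in `N_c`, other rows zero. -/
noncomputable def Rmat {n : ℕ} (A : Fin n → Fin n → ℝ≥0) (G : CritSubgraph A) :
    Fin n → Fin n → ℝ≥0 :=
  fun i j => if G.Nc i then kleeneStar (mpow A (graphCyc G.E)) i j else 0

/-- The matrix `S`: the restriction of `A` to the edges of the subgraph. -/
noncomputable def Smat {n : ℕ} (A : Fin n → Fin n → ℝ≥0) (G : CritSubgraph A) :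
    Fin n → Fin n → ℝ≥0 :=
  fun i j => if G.E i j then A i j else 0

/-- The CSR product `P^(t) = C ⊗ S^t ⊗ R`. -/
noncomputable def csr {n : ℕ} (A : Fin n → Fin n → ℝ≥0) (G : CritSubgraph A) (t : ℕ) :
    Fin n → Fin n → ℝ≥0 :=
  mmul (mmul (Cmat A G) (mpow (Smat A G) t)) (Rmat A G)

/-- The strongly connected component (as a node set) of `i` in `E`. -/
def scc {n : ℕ} (E : Fin n → Fin n → Prop) (i : Fin n) : Set (Fin n) :=
  {j | Reach E i j ∧ Reach E j i}

/-- The principal submatrix of `A` on the strongly connected component of `i`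
in `D(A)` (other entries zero). -/
noncomputable def compMat {n : ℕ} (A : Fin n → Fin n → ℝ≥0) (i : Fin n) :
    Fin n → Fin n → ℝ≥0 :=
  fun a b => if a ∈ scc (edges A) i ∧ b ∈ scc (edges A) i then A a b else 0

/-- `λ(i)`: the m.c.g.m. of the component of `D(A)` containing `i`. -/
noncomputable def lamNode {n : ℕ} (A : Fin n → Fin n → ℝ≥0) (i : Fin n) : ℝ≥0 :=
  mcgm (compMat A i)

/-- `i` belongs to a nontrivial component of `D(A)` (it lies on a cycle). -/
def Nontrivial' {n : ℕ} (A : Fin n → Fin n → ℝ≥0) (i : Fin n) : Prop :=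
  (cycLen (edges A) i).Nonempty

/-- `γ`: the lcm of the cyclicities of the critical graphs of the nontrivial
components of `D(A)`. -/
noncomputable def gammaU {n : ℕ} (A : Fin n → Fin n → ℝ≥0) : ℕ :=
  Finset.univ.lcm fun i =>
    if Nontrivial' A i then graphCyc (IsCriticalEdge (compMat A i)) else 1

/-- Max-times matrix-vector product. -/
noncomputable def mvec {n : ℕ} (M : Fin n → Fin n → ℝ≥0) (y : Fin n → ℝ≥0) :
    Fin n → ℝ≥0 :=
  fun a => Finset.univ.sup fun k => M a k * y k

/-- `i` strongly accesses `j`: paths of every sufficiently large length exist. -/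
def StrongAccess {n : ℕ} (E : Fin n → Fin n → Prop) (i j : Fin n) : Prop :=
  ∃ T, ∀ t ≥ T, ∃ p : Fin (t+1) → Fin n, IsEPath E t p ∧ p 0 = i ∧ p (Fin.last t) = j

section Aux
variable {n : ℕ}

/-- weight of a list walk starting at `i` -/
noncomputable def wW (M : Fin n → Fin n → ℝ≥0) : Fin n → List (Fin n) → ℝ≥0
  | _, [] => 1
  | i, b :: l => M i b * wW M b l

@[simp] lemma wW_nil (M : Fin n → Fin n → ℝ≥0) (i : Fin n) : wW M i [] = 1 := rfl
@[simp] lemma wW_cons (M : Fin n → Fin n → ℝ≥0) (i b : Fin n) (l : List (Fin n)) :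
    wW M i (b :: l) = M i b * wW M b l := rfl

lemma getLast_cc (i b : Fin n) (l : List (Fin n)) :
    (i :: b :: l).getLast (List.cons_ne_nil _ _) = (b :: l).getLast (List.cons_ne_nil _ _) :=
  List.getLast_cons _

lemma wW_append (M : Fin n → Fin n → ℝ≥0) :
    ∀ (l1 : List (Fin n)) (i : Fin n) (l2 : List (Fin n)),
    wW M i (l1 ++ l2)
      = wW M i l1 * wW M ((i :: l1).getLast (List.cons_ne_nil _ _)) l2
  | [], i, l2 => by simp
  | b :: l1, i, l2 => by
    rw [List.cons_append, wW_cons, wW_append M l1 b l2, getLast_cc, wW_cons, mul_assoc]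

lemma getLast_cons_append (i : Fin n) (l1 l2 : List (Fin n)) :
    (i :: (l1 ++ l2)).getLast (List.cons_ne_nil _ _)
      = (((i :: l1).getLast (List.cons_ne_nil _ _)) :: l2).getLast (List.cons_ne_nil _ _) := by
  induction l1 generalizing i with
  | nil => simp
  | cons b l1 ih =>
    rw [List.cons_append, getLast_cc, ih b, getLast_cc]

lemma getLast_cons_take : ∀ (l : List (Fin n)) (i : Fin n) (s : ℕ), s ≤ l.length →
    (i :: l.take s).getLast (List.cons_ne_nil _ _) = (i :: l).getD s i
  | _, _, 0, _ => by simp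
  | [], i, s+1, h => by simp at h
  | b :: l, i, s+1, h => by
    have h' : s ≤ l.length := Nat.succ_le_succ_iff.mp h
    rw [List.take_succ_cons, List.getD_cons_succ, getLast_cc, getLast_cons_take l b s h',
      List.getD_eq_getElem _ _ (by simp; omega), List.getD_eq_getElem _ _ (by simp; omega)]

lemma getLast_eq_of_eq {l1 l2 : List (Fin n)} (h : l1 = l2) (h1 : l1 ≠ []) :
    l1.getLast h1 = l2.getLast (h ▸ h1) := by subst h; rfl

lemma walk_le_mpow (M : Fin n → Fin n → ℝ≥0) :
    ∀ (l : List (Fin n)) (i : Fin n),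
      wW M i l ≤ mpow M l.length i ((i :: l).getLast (List.cons_ne_nil _ _))
  | [], i => by simp [mpow]
  | b :: l, i => by
    rw [getLast_cc]
    calc wW M i (b :: l) = M i b * wW M b l := rfl
    _ ≤ M i b * mpow M l.length b ((b :: l).getLast (List.cons_ne_nil _ _)) :=
        mul_le_mul_right (walk_le_mpow M l b) _
    _ ≤ mpow M (b :: l).length i ((b :: l).getLast (List.cons_ne_nil _ _)) := by
        show _ ≤ mmul M (mpow M l.length) i _
        exact Finset.le_sup (f := fun k => M i k * mpow M l.length k _) (Finset.mem_univ b)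

lemma mpow_exists_walk (M : Fin n → Fin n → ℝ≥0) :
    ∀ (k : ℕ) (i j : Fin n), mpow M k i j ≠ 0 →
      ∃ l : List (Fin n), l.length = k ∧
        (i :: l).getLast (List.cons_ne_nil _ _) = j ∧ wW M i l = mpow M k i j
  | 0, i, j, h => by
    by_cases hij : i = j
    · exact ⟨[], rfl, by simp [hij], by simp [mpow, hij]⟩
    · exact absurd (by simp [mpow, hij]) h
  | k+1, i, j, h => by
    obtain ⟨b, -, hb⟩ := Finset.exists_mem_eq_sup Finset.univ ⟨i, Finset.mem_univ i⟩
      (fun k' => M i k' * mpow M k k' j)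
    have hsup : mpow M (k+1) i j = M i b * mpow M k b j := hb
    have hb0 : mpow M k b j ≠ 0 := by
      intro h0; rw [hsup, h0, mul_zero] at h; exact h rfl
    obtain ⟨l, hl, hlast, hw⟩ := mpow_exists_walk M k b j hb0
    exact ⟨b :: l, by simp [hl], by rw [getLast_cc]; exact hlast, by rw [wW_cons, hw, hsup]⟩

lemma pathWeight_eq_wW (M : Fin n → Fin n → ℝ≥0) :
    ∀ (l : List (Fin n)) (k : ℕ) (i : Fin n), l.length = k →
      pathWeight M k (fun t : Fin (k+1) => (i :: l).getD ↑t i) = wW M i l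
  | [], k, i, h => by subst h; simp [pathWeight]
  | b :: l, k, i, h => by
    subst h
    show (∏ t : Fin (l.length + 1),
      M ((i :: b :: l).getD ↑(t.castSucc) i) ((i :: b :: l).getD ↑(t.succ) i)) = _
    rw [Fin.prod_univ_succ, wW_cons]
    have hIH := pathWeight_eq_wW M l l.length b rfl
    rw [pathWeight] at hIH
    rw [← hIH]
    congr 1
    apply Finset.prod_congr rfl
    intro t _
    have h1 : (↑t : ℕ) < (b :: l).length := by simp
    have h2 : (↑t : ℕ) + 1 < (b :: l).length := by simp [Nat.succ_lt_succ_iff, t.isLt]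
    simp only [Fin.coe_castSucc, Fin.val_succ, List.getD_cons_succ,
      List.getD_eq_getElem _ _ h1, List.getD_eq_getElem _ _ h2]


variable {A : Fin n → Fin n → ℝ≥0}

lemma rpow_inv_le_one {x : ℝ≥0} {k : ℕ} (hk : k ≠ 0) (h : x ^ ((1:ℝ)/(k:ℝ)) ≤ 1) : x ≤ 1 := by
  have hk' : (k:ℝ) ≠ 0 := Nat.cast_ne_zero.mpr hk
  have h2 : (x ^ ((1:ℝ)/(k:ℝ))) ^ (k:ℝ) ≤ 1 ^ (k:ℝ) := NNReal.rpow_le_rpow h (by positivity)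
  rwa [← NNReal.rpow_mul, one_div, inv_mul_cancel₀ hk', NNReal.rpow_one, NNReal.one_rpow] at h2

lemma rpow_inv_eq_one {x : ℝ≥0} {k : ℕ} (hk : k ≠ 0) (h : x ^ ((1:ℝ)/(k:ℝ)) = 1) : x = 1 := by
  have hk' : (k:ℝ) ≠ 0 := Nat.cast_ne_zero.mpr hk
  have h2 : (x ^ ((1:ℝ)/(k:ℝ))) ^ (k:ℝ) = 1 ^ (k:ℝ) := by rw [h]
  rwa [← NNReal.rpow_mul, one_div, inv_mul_cancel₀ hk', NNReal.rpow_one, NNReal.one_rpow] at h2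

lemma le_mcgm (h1 : mcgm A = 1) {k : ℕ} (hk0 : 0 < k) (hkn : k ≤ n)
    (p : Fin (k+1) → Fin n) (hc : p 0 = p (Fin.last k)) :
    pathWeight A k p ^ ((1:ℝ)/(k:ℝ)) ≤ 1 := by
  have hbdd : BddAbove {x : ℝ≥0 | ∃ k : ℕ, 0 < k ∧ k ≤ n ∧ ∃ p : Fin (k+1) → Fin n,
      p 0 = p (Fin.last k) ∧ x = pathWeight A k p ^ ((1 : ℝ) / (k : ℝ))} := by
    by_contra hb
    rw [mcgm, csSup_of_not_bddAbove hb, csSup_empty] at h1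
    exact zero_ne_one h1
  have := le_csSup hbdd (s := {x : ℝ≥0 | ∃ k : ℕ, 0 < k ∧ k ≤ n ∧ ∃ p : Fin (k+1) → Fin n,
      p 0 = p (Fin.last k) ∧ x = pathWeight A k p ^ ((1 : ℝ) / (k : ℝ))})
    (a := pathWeight A k p ^ ((1:ℝ)/(k:ℝ))) ⟨k, hk0, hkn, p, hc, rfl⟩
  rw [← mcgm] at this
  rwa [h1] at this

lemma closed_short_le_one (h1 : mcgm A = 1) (l : List (Fin n)) (i : Fin n)
    (h0 : 0 < l.length) (hn : l.length ≤ n)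
    (hc : (i :: l).getLast (List.cons_ne_nil _ _) = i) : wW A i l ≤ 1 := by
  set k := l.length with hk
  set p : Fin (k+1) → Fin n := fun t => (i :: l).getD ↑t i with hp
  have hpw : pathWeight A k p = wW A i l := pathWeight_eq_wW A l k i rfl
  have hlast : p (Fin.last k) = i := by
    show (i :: l).getD ↑(Fin.last k) i = i
    rw [Fin.val_last, List.getD_eq_getElem _ _ (by simp; omega)]
    rw [List.getLast_eq_getElem] at hc
    simpa using hc
  have hcl : p 0 = p (Fin.last k) := by
    rw [hlast]; show (i :: l).getD 0 i = i; simp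
  have := le_mcgm h1 h0 hn p hcl
  rw [← hpw]
  exact rpow_inv_le_one (by omega) this

lemma splice (h1 : mcgm A = 1) (l : List (Fin n)) (i : Fin n) (hl : n + 1 ≤ l.length) :
    ∃ l' : List (Fin n), l'.length < l.length ∧
      (i :: l').getLast (List.cons_ne_nil _ _) = (i :: l).getLast (List.cons_ne_nil _ _) ∧
      wW A i l ≤ wW A i l' := by
  have hpig : ∃ a b : Fin (n+1), (a:ℕ) < (b:ℕ) ∧
      (i :: l).getD (a:ℕ) i = (i :: l).getD (b:ℕ) i := by
    obtain ⟨a, b, hab, hfab⟩ := Fintype.exists_ne_map_eq_of_card_lt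
      (fun t : Fin (n+1) => (i :: l).getD ↑t i) (by simp)
    rcases lt_or_gt_of_ne (fun h => hab (Fin.ext h) : (a:ℕ) ≠ (b:ℕ)) with h | h
    · exact ⟨a, b, h, hfab⟩
    · exact ⟨b, a, h, hfab.symm⟩
  obtain ⟨a, b, hlt, hmid⟩ := hpig
  set a' := (a:ℕ) with ha'
  set b' := (b:ℕ) with hb'
  have hb'n : b' ≤ n := Nat.lt_succ_iff.mp b.isLt
  have hb'len : b' ≤ l.length := le_trans hb'n (by omega)
  have ha'len : a' ≤ l.length := le_trans (le_of_lt hlt) hb'len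
  set seg := (l.drop a').take (b' - a') with hseg
  have hsegdef : l.take b' = l.take a' ++ seg := by
    rw [hseg, ← List.take_add]; congr 1; omega
  have hTD : l.take b' ++ l.drop b' = l := List.take_append_drop _ _
  have hdecomp : l = (l.take a' ++ seg) ++ l.drop b' := by rw [← hsegdef, hTD]
  have hmida : (i :: l.take a').getLast (List.cons_ne_nil _ _) = (i :: l).getD a' i :=
    getLast_cons_take l i a' ha'len
  have hmidb : (i :: l.take b').getLast (List.cons_ne_nil _ _) = (i :: l).getD b' i :=
    getLast_cons_take l i b' hb'len
  have hsegclosed : (((i :: l).getD a' i) :: seg).getLast (List.cons_ne_nil _ _)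
      = (i :: l).getD a' i := by
    have e1 : (i :: l.take b').getLast (List.cons_ne_nil _ _)
        = (((i :: l.take a').getLast (List.cons_ne_nil _ _)) :: seg).getLast
            (List.cons_ne_nil _ _) := by
      rw [getLast_eq_of_eq (congrArg (List.cons i) hsegdef) (List.cons_ne_nil _ _)]
      exact getLast_cons_append i (l.take a') seg
    rw [hmida] at e1
    rw [← e1, hmidb, ← hmid]
  have hseglen : seg.length = b' - a' := by
    rw [hseg, List.length_take, List.length_drop]
    omega
  have hseg1 : wW A ((i :: l).getD a' i) seg ≤ 1 := by
    apply closed_short_le_one h1 seg _ (by omega) (by omega) hsegclosed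
  refine ⟨l.take a' ++ l.drop b', ?_, ?_, ?_⟩
  · rw [List.length_append, List.length_take, List.length_drop]
    omega
  · rw [getLast_cons_append, hmida, hmid]
    conv_rhs => rw [getLast_eq_of_eq (congrArg (List.cons i) hTD.symm) (List.cons_ne_nil _ _)]
    rw [getLast_cons_append, hmidb]
  · have hdecomp2 : l = l.take a' ++ (seg ++ l.drop b') := by
      rw [← List.append_assoc, ← hsegdef, hTD]
    conv_lhs => rw [hdecomp2]
    rw [wW_append A (l.take a') i (seg ++ l.drop b'), hmida,
        wW_append A seg ((i::l).getD a' i) (l.drop b'), hsegclosed,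
        wW_append A (l.take a') i (l.drop b'), hmida]
    calc wW A i (l.take a') * (wW A ((i::l).getD a' i) seg * wW A ((i::l).getD a' i) (l.drop b'))
        ≤ wW A i (l.take a') * (1 * wW A ((i::l).getD a' i) (l.drop b')) :=
          mul_le_mul_right (mul_le_mul_left hseg1 _) _
      _ = wW A i (l.take a') * wW A ((i::l).getD a' i) (l.drop b') := by rw [one_mul]

lemma wW_closed_le_one_aux (h1 : mcgm A = 1) :
    ∀ (k : ℕ) (l : List (Fin n)) (i : Fin n), l.length = k →
      (i :: l).getLast (List.cons_ne_nil _ _) = i → wW A i l ≤ 1 := by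
  intro k
  induction k using Nat.strong_induction_on with
  | _ k ih =>
    intro l i hlen hc
    by_cases hn : l.length ≤ n
    · rcases Nat.eq_zero_or_pos l.length with h0 | h0
      · rw [List.length_eq_zero_iff.mp h0]; simp
      · exact closed_short_le_one h1 l i h0 hn hc
    · obtain ⟨l', hltl, hlast, hle⟩ := splice h1 l i (by omega)
      exact le_trans hle (ih l'.length (by omega) l' i rfl (hlast.trans hc))

lemma wW_closed_le_one (h1 : mcgm A = 1) (l : List (Fin n)) (i : Fin n)
    (hc : (i :: l).getLast (List.cons_ne_nil _ _) = i) : wW A i l ≤ 1 :=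
  wW_closed_le_one_aux h1 l.length l i rfl hc

/-- entry bound -/
noncomputable def entB (A : Fin n → Fin n → ℝ≥0) : ℝ≥0 :=
  1 ⊔ Finset.univ.sup (fun p : Fin n × Fin n => A p.1 p.2)

lemma one_le_entB : 1 ≤ entB A := le_sup_left

lemma entry_le_entB (i j : Fin n) : A i j ≤ entB A :=
  le_sup_of_le_right (Finset.le_sup (f := fun p : Fin n × Fin n => A p.1 p.2)
    (Finset.mem_univ (i, j)))

lemma wW_le_pow : ∀ (l : List (Fin n)) (i : Fin n), wW A i l ≤ entB A ^ l.length
  | [], i => by simp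
  | b :: l, i => by
    rw [wW_cons]
    calc A i b * wW A b l ≤ entB A * entB A ^ l.length :=
      mul_le_mul' (entry_le_entB i b) (wW_le_pow l b)
    _ = entB A ^ (b :: l).length := by rw [List.length_cons, pow_succ, mul_comm]

lemma wW_le_bound_aux (h1 : mcgm A = 1) :
    ∀ (k : ℕ) (l : List (Fin n)) (i : Fin n), l.length = k → wW A i l ≤ entB A ^ n := by
  intro k
  induction k using Nat.strong_induction_on with
  | _ k ih =>
    intro l i hlen
    by_cases hn : l.length ≤ n
    · exact le_trans (wW_le_pow l i) (pow_le_pow_right₀ one_le_entB hn)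
    · obtain ⟨l', hltl, hlast, hle⟩ := splice h1 l i (by omega)
      exact le_trans hle (ih l'.length (by omega) l' i rfl)

lemma mpow_le_bound (h1 : mcgm A = 1) (k : ℕ) (i j : Fin n) :
    mpow A k i j ≤ entB A ^ n := by
  by_cases h : mpow A k i j = 0
  · rw [h]; exact zero_le
  · obtain ⟨l, hl, -, hw⟩ := mpow_exists_walk A k i j h
    rw [← hw]; exact wW_le_bound_aux h1 l.length l i rfl

lemma bdd_mpow (h1 : mcgm A = 1) (g : ℕ → ℕ) (i j : Fin n) :
    BddAbove (Set.range fun m => mpow A (g m) i j) := by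
  refine ⟨entB A ^ n, ?_⟩
  rintro x ⟨m, rfl⟩
  exact mpow_le_bound h1 (g m) i j

lemma mul_fsup {α : Type*} [Fintype α] (c : ℝ≥0) (f : α → ℝ≥0) :
    c * Finset.univ.sup f = Finset.univ.sup fun x => c * f x :=
  Finset.comp_sup_eq_sup_comp (fun x => c * x)
    (fun _ _ => Monotone.map_max (fun _ _ h => mul_le_mul_right h c)) (mul_zero c)

lemma fsup_mul {α : Type*} [Fintype α] (c : ℝ≥0) (f : α → ℝ≥0) :
    (Finset.univ.sup f) * c = Finset.univ.sup fun x => f x * c :=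
  Finset.comp_sup_eq_sup_comp (fun x => x * c)
    (fun _ _ => Monotone.map_max (fun _ _ h => mul_le_mul_left h c)) (zero_mul c)

lemma mmul_assoc (A B C : Fin n → Fin n → ℝ≥0) : mmul (mmul A B) C = mmul A (mmul B C) := by
  funext i j
  show (Finset.univ.sup fun l => (Finset.univ.sup fun k => A i k * B k l) * C l j)
    = Finset.univ.sup fun k => A i k * Finset.univ.sup fun l => B k l * C l j
  calc (Finset.univ.sup fun l => (Finset.univ.sup fun k => A i k * B k l) * C l j)
      = Finset.univ.sup fun l => Finset.univ.sup fun k => A i k * B k l * C l j := by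
        apply Finset.sup_congr rfl; intro l _; rw [fsup_mul]
    _ = Finset.univ.sup fun k => Finset.univ.sup fun l => A i k * B k l * C l j :=
        Finset.sup_comm _ _ _
    _ = Finset.univ.sup fun k => A i k * Finset.univ.sup fun l => B k l * C l j := by
        apply Finset.sup_congr rfl; intro k _
        rw [mul_fsup]
        apply Finset.sup_congr rfl; intro l _
        rw [mul_assoc]

lemma mmul_id_left (M : Fin n → Fin n → ℝ≥0) : mmul (mpow M 0) M = M := by
  funext i j
  apply le_antisymm
  · apply Finset.sup_le
    intro k _
    by_cases hik : i = k
    · subst hik; simp [mpow]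
    · simp [mpow, hik]
  · calc M i j = mpow M 0 i i * M i j := by simp [mpow]
    _ ≤ _ := Finset.le_sup (f := fun k => mpow M 0 i k * M k j) (Finset.mem_univ i)

lemma mmul_id_left' (M N : Fin n → Fin n → ℝ≥0) : mmul (mpow N 0) M = M := by
  have : mpow N 0 = mpow M 0 := rfl
  rw [this, mmul_id_left]

lemma mpow_succ (M : Fin n → Fin n → ℝ≥0) (k : ℕ) : mpow M (k+1) = mmul M (mpow M k) := rfl

lemma mpow_add (M : Fin n → Fin n → ℝ≥0) (a b : ℕ) :
    mpow M (a + b) = mmul (mpow M a) (mpow M b) := by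
  induction a with
  | zero => rw [Nat.zero_add, mmul_id_left']
  | succ a ih =>
    have h : a + 1 + b = (a + b) + 1 := by omega
    rw [h, mpow_succ, ih, mpow_succ, mmul_assoc]

lemma mpow_mul (M : Fin n → Fin n → ℝ≥0) (g : ℕ) :
    ∀ m : ℕ, mpow (mpow M g) m = mpow M (g * m)
  | 0 => by rw [Nat.mul_zero]; rfl
  | m+1 => by
    rw [mpow_succ, mpow_mul M g m, ← mpow_add]
    have h : g + g * m = g * (m + 1) := by ring
    rw [h]

lemma iSup_mul_le {f : ℕ → ℝ≥0} {c X : ℝ≥0} (h : ∀ m, f m * c ≤ X) : (⨆ m, f m) * c ≤ X := by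
  rcases eq_or_ne c 0 with rfl | hc
  · simp
  · have h2 : (⨆ m, f m) ≤ X / c := ciSup_le fun m => (le_div_iff₀ (pos_iff_ne_zero.mpr hc)).mpr (h m)
    calc (⨆ m, f m) * c ≤ (X / c) * c := mul_le_mul_left h2 c
    _ = X := div_mul_cancel₀ X hc

lemma mul_iSup_le {f : ℕ → ℝ≥0} {c X : ℝ≥0} (h : ∀ m, c * f m ≤ X) : c * (⨆ m, f m) ≤ X := by
  rw [mul_comm]; exact iSup_mul_le (fun m => by rw [mul_comm]; exact h m)

lemma chain_append' {R : Fin n → Fin n → Prop} :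
    ∀ (l1 : List (Fin n)) (i : Fin n) (l2 : List (Fin n)), List.Chain R i l1 →
      List.Chain R ((i :: l1).getLast (List.cons_ne_nil _ _)) l2 → List.Chain R i (l1 ++ l2)
  | [], i, l2, _, h2 => by simpa using h2
  | b :: l1, i, l2, h1, h2 => by
    rcases List.chain_cons.mp h1 with ⟨hib, h1'⟩
    rw [getLast_cc] at h2
    exact List.chain_cons.mpr ⟨hib, chain_append' l1 b l2 h1' h2⟩

lemma chain_split' {R : Fin n → Fin n → Prop} :
    ∀ (l1 : List (Fin n)) (i : Fin n) (l2 : List (Fin n)), List.Chain R i (l1 ++ l2) →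
      List.Chain R i l1 ∧ List.Chain R ((i :: l1).getLast (List.cons_ne_nil _ _)) l2
  | [], i, l2, h => ⟨List.Chain.nil, by simpa using h⟩
  | b :: l1, i, l2, h => by
    rcases List.chain_cons.mp h with ⟨hib, h'⟩
    obtain ⟨c1, c2⟩ := chain_split' l1 b l2 h'
    exact ⟨List.chain_cons.mpr ⟨hib, c1⟩, by rwa [getLast_cc]⟩

lemma getLast_eq_getD (x : Fin n) (m : List (Fin n)) :
    (x :: m).getLast (List.cons_ne_nil _ _) = (x :: m).getD m.length x := by
  rw [List.getLast_eq_getElem]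
  exact (List.getD_eq_getElem _ _ (by simp)).symm

lemma crit_edge_back (h1 : mcgm A = 1) {u v : Fin n} (h : IsCriticalEdge A u v) :
    ∃ m : List (Fin n), ((v :: m).getLast (List.cons_ne_nil _ _) = u)
      ∧ A u v * wW A v m = 1 := by
  obtain ⟨k, hk0, hkn, p, hclosed, hw, t, htu, htv⟩ := h
  rw [h1] at hw
  have hpw1 : pathWeight A k p = 1 := rpow_inv_eq_one (by omega) hw
  set i := p 0 with hi
  set l : List (Fin n) := List.ofFn (fun s : Fin k => p s.succ) with hldef
  have hlen : l.length = k := List.length_ofFn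
  have hfun : (fun s : Fin (k+1) => (i :: l).getD ↑s i) = p := by
    funext s
    rcases s with ⟨sv, hs⟩
    cases sv with
    | zero => simp [hi]
    | succ s' =>
      have hs' : s' < k := by omega
      show (i :: l).getD (s' + 1) i = _
      rw [List.getD_cons_succ, List.getD_eq_getElem _ _ (by rw [hlen]; exact hs')]
      have hofn : (List.ofFn fun s : Fin k => p s.succ)[s']'
          (by simpa [List.length_ofFn] using hs') = p ⟨s' + 1, hs⟩ := by
        rw [List.getElem_ofFn]
        congr 1
      exact hofn
  have hwl : wW A i l = 1 := by
    have hpe := pathWeight_eq_wW A l k i hlen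
    rw [hfun] at hpe
    rw [← hpe, hpw1]
  have hgetD : ∀ s : Fin (k+1), (i :: l).getD ↑s i = p s := fun s => congrFun hfun s
  have hclosed' : (i :: l).getLast (List.cons_ne_nil _ _) = i := by
    have h2 := hgetD (Fin.last k)
    rw [Fin.val_last] at h2
    rw [getLast_eq_getD, hlen, h2]
    exact hclosed.symm
  set s := (t : ℕ) with hs
  have hsk : s < k := t.isLt
  have hu : (i :: l).getD s i = u := by
    have := hgetD t.castSucc
    rwa [Fin.coe_castSucc, htu] at this
  have hv : (i :: l).getD (s+1) i = v := by
    have := hgetD t.succ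
    rwa [Fin.val_succ, htv] at this
  -- split
  have hslen : s ≤ l.length := by omega
  have hdropeq : l.drop s = v :: l.drop (s+1) := by
    rw [List.drop_eq_getElem_cons (by omega)]
    congr 1
    rw [← hv, List.getD_cons_succ, List.getD_eq_getElem _ _ (by omega)]
  have hmida : (i :: l.take s).getLast (List.cons_ne_nil _ _) = u := by
    rw [getLast_cons_take l i s hslen, hu]
  have hTD : l.take s ++ l.drop s = l := List.take_append_drop _ _
  have hjunc : (v :: l.drop (s+1)).getLast (List.cons_ne_nil _ _) = i := by
    have e1 : (i :: l).getLast (List.cons_ne_nil _ _)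
        = ((u :: l.drop s).getLast (List.cons_ne_nil _ _)) := by
      conv_lhs => rw [getLast_eq_of_eq (congrArg (List.cons i) hTD.symm) (List.cons_ne_nil _ _)]
      rw [getLast_cons_append, hmida]
    rw [hclosed'] at e1
    rw [hdropeq, getLast_cc] at e1
    exact e1.symm
  have hwdecomp : wW A i l = wW A i (l.take s) * (A u v * wW A v (l.drop (s+1))) := by
    conv_lhs => rw [← hTD]
    rw [wW_append A (l.take s) i (l.drop s), hmida, hdropeq, wW_cons]
  refine ⟨l.drop (s+1) ++ l.take s, ?_, ?_⟩
  · rw [getLast_cons_append, hjunc, hmida]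
  · rw [wW_append A (l.drop (s+1)) v (l.take s), hjunc]
    calc A u v * (wW A v (l.drop (s+1)) * wW A i (l.take s))
        = wW A i (l.take s) * (A u v * wW A v (l.drop (s+1))) := by ring
      _ = wW A i l := hwdecomp.symm
      _ = 1 := hwl

end Aux

section Aux2
variable {n : ℕ} {A : Fin n → Fin n → ℝ≥0}

lemma crit_chain_back (h1 : mcgm A = 1) (G : CritSubgraph A) :
    ∀ (l : List (Fin n)) (i : Fin n), List.Chain G.E i l →
      ∃ m : List (Fin n),
        ((((i :: l).getLast (List.cons_ne_nil _ _)) :: m).getLast (List.cons_ne_nil _ _) = i)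
        ∧ wW A i l * wW A ((i :: l).getLast (List.cons_ne_nil _ _)) m = 1
  | [], i, _ => ⟨[], by simp, by simp⟩
  | b :: l, i, hch => by
    obtain ⟨hEib, hchain⟩ := List.chain_cons.mp hch
    obtain ⟨m0, hm0last, hm0⟩ := crit_edge_back h1 (G.critical i b hEib)
    obtain ⟨m', hm'last, hm'⟩ := crit_chain_back h1 G l b hchain
    rw [getLast_cc]
    refine ⟨m' ++ m0, ?_, ?_⟩
    · rw [getLast_cons_append, hm'last]
      exact hm0last
    · rw [wW_append A m' _ m0, hm'last, wW_cons]
      calc A i b * wW A b l * (wW A ((b :: l).getLast (List.cons_ne_nil _ _)) m' * wW A b m0)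
          = (A i b * wW A b m0) * (wW A b l * wW A ((b :: l).getLast (List.cons_ne_nil _ _)) m') := by
            ring
        _ = 1 := by rw [hm0, hm']; ring

lemma crit_closed_eq_one (h1 : mcgm A = 1) (G : CritSubgraph A) {l : List (Fin n)} {i : Fin n}
    (hch : List.Chain G.E i l)
    (hcl : (i :: l).getLast (List.cons_ne_nil _ _) = i) : wW A i l = 1 := by
  obtain ⟨m, hml, hw⟩ := crit_chain_back h1 G l i hch
  rw [hcl] at hml hw
  have h2 : wW A i l ≤ 1 := wW_closed_le_one h1 l i hcl
  have h3 : wW A i m ≤ 1 := wW_closed_le_one h1 m i hml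
  refine le_antisymm h2 ?_
  calc (1:ℝ≥0) = wW A i l * wW A i m := hw.symm
    _ ≤ wW A i l * 1 := mul_le_mul_right h3 _
    _ = wW A i l := mul_one _

lemma chain_wW_S (G : CritSubgraph A) :
    ∀ (l : List (Fin n)) (i : Fin n), List.Chain G.E i l → wW (Smat A G) i l = wW A i l
  | [], _, _ => rfl
  | b :: l, i, h => by
    obtain ⟨hib, h'⟩ := List.chain_cons.mp h
    rw [wW_cons, wW_cons, chain_wW_S G l b h', Smat, if_pos hib]

lemma chain_of_wW_S_ne (G : CritSubgraph A) :
    ∀ (l : List (Fin n)) (i : Fin n), wW (Smat A G) i l ≠ 0 → List.Chain G.E i l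
  | [], _, _ => List.Chain.nil
  | b :: l, i, h => by
    rw [wW_cons] at h
    have h1 : Smat A G i b ≠ 0 := fun h0 => h (by rw [h0, zero_mul])
    have h2 : wW (Smat A G) b l ≠ 0 := fun h0 => h (by rw [h0, mul_zero])
    have hE : G.E i b := by
      by_contra hE
      exact h1 (by rw [Smat]; exact if_neg hE)
    exact List.chain_cons.mpr ⟨hE, chain_of_wW_S_ne G l b h2⟩

lemma finpath_to_chain {E : Fin n → Fin n → Prop} {k : ℕ} {p : Fin (k+1) → Fin n}
    (hp : IsEPath E k p) :
    List.Chain E (p 0) (List.ofFn fun s : Fin k => p s.succ)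
    ∧ ((p 0 :: List.ofFn fun s : Fin k => p s.succ).getLast (List.cons_ne_nil _ _)
        = p (Fin.last k)) := by
  constructor
  · show List.IsChain E (p 0 :: List.ofFn fun s : Fin k => p s.succ)
    rw [List.isChain_iff_getElem]
    intro s hs
    simp only [List.length_cons, List.length_ofFn] at hs
    have hget : ∀ r (hr : r < k + 1), (p 0 :: List.ofFn fun s : Fin k => p s.succ)[r]'(by
        simp; omega) = p ⟨r, hr⟩ := by
      intro r hr
      rcases r with _ | r
      · simp only [List.getElem_cons_zero]
        exact congrArg p (Fin.ext (by simp))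
      · simp only [List.getElem_cons_succ, List.getElem_ofFn]
        exact congrArg p (Fin.ext (by simp))
    rw [hget s (by omega), hget (s+1) (by omega)]
    exact hp ⟨s, by omega⟩
  · rcases Nat.eq_zero_or_pos k with rfl | hk
    · simp
    · rw [getLast_eq_getD, List.length_ofFn]
      obtain ⟨k', rfl⟩ : ∃ k', k = k' + 1 := ⟨k - 1, by omega⟩
      rw [List.getD_cons_succ, List.getD_eq_getElem _ _ (by simp), List.getElem_ofFn]
      exact congrArg p (Fin.ext (by simp))

lemma Nc_cycle (G : CritSubgraph A) {i : Fin n} (hi : G.Nc i) :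
    ∃ l : List (Fin n), l ≠ [] ∧ List.Chain G.E i l ∧
      (i :: l).getLast (List.cons_ne_nil _ _) = i := by
  rcases hi with ⟨j, hij⟩ | ⟨j, hji⟩
  · obtain ⟨k, p, hp, hp0, hpl⟩ := G.reducible i j hij
    obtain ⟨hch, hlast⟩ := finpath_to_chain hp
    rw [hp0] at hch hlast
    rw [hpl] at hlast
    exact ⟨j :: List.ofFn fun s : Fin k => p s.succ, by simp,
      List.chain_cons.mpr ⟨hij, hch⟩, by rw [getLast_cc]; exact hlast⟩
  · obtain ⟨k, p, hp, hp0, hpl⟩ := G.reducible j i hji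
    obtain ⟨hch, hlast⟩ := finpath_to_chain hp
    rw [hp0] at hch hlast
    rw [hpl] at hlast
    refine ⟨(List.ofFn fun s : Fin k => p s.succ) ++ [i], by simp, ?_, ?_⟩
    · apply chain_append' _ i [i] hch
      rw [hlast]
      exact List.chain_cons.mpr ⟨hji, List.Chain.nil⟩
    · rw [getLast_cons_append, hlast]
      rw [getLast_cc]
      exact List.getLast_singleton _

lemma chain_take_drop {R : Fin n → Fin n → Prop} {i : Fin n} {l : List (Fin n)}
    (h : List.Chain R i l) (s : ℕ) (hs : s ≤ l.length) :
    List.Chain R i (l.take s) ∧ List.Chain R ((i :: l).getD s i) (l.drop s)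
    ∧ (i :: l.take s).getLast (List.cons_ne_nil _ _) = (i :: l).getD s i := by
  have h2 : List.Chain R i (l.take s ++ l.drop s) := by rw [List.take_append_drop]; exact h
  obtain ⟨c1, c2⟩ := chain_split' (l.take s) i (l.drop s) h2
  have hm := getLast_cons_take l i s hs
  rw [hm] at c2
  exact ⟨c1, c2, hm⟩

lemma getLast_drop_part (l : List (Fin n)) (i : Fin n) (s : ℕ) (hs : s ≤ l.length) :
    (((i :: l).getD s i) :: l.drop s).getLast (List.cons_ne_nil _ _)
      = (i :: l).getLast (List.cons_ne_nil _ _) := by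
  conv_rhs => rw [getLast_eq_of_eq
    (congrArg (List.cons i) (List.take_append_drop s l).symm) (List.cons_ne_nil _ _)]
  rw [getLast_cons_append, getLast_cons_take l i s hs]

/-- m-fold repetition of a list -/
def repL {α : Type*} : ℕ → List α → List α
  | 0, _ => []
  | m+1, l => l ++ repL m l

@[simp] lemma repL_length {α : Type*} : ∀ (m : ℕ) (l : List α), (repL m l).length = m * l.length
  | 0, l => by simp [repL]
  | m+1, l => by
    rw [repL, List.length_append, repL_length m l]
    ring

lemma chain_repL {R : Fin n → Fin n → Prop} {i : Fin n} {l : List (Fin n)}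
    (h : List.Chain R i l) (hcl : (i :: l).getLast (List.cons_ne_nil _ _) = i) :
    ∀ m : ℕ, List.Chain R i (repL m l) ∧
      (i :: repL m l).getLast (List.cons_ne_nil _ _) = i
  | 0 => ⟨List.Chain.nil, by simp [repL]⟩
  | m+1 => by
    obtain ⟨c1, c2⟩ := chain_repL h hcl m
    constructor
    · rw [repL]
      apply chain_append' _ _ _ h
      rw [hcl]
      exact c1
    · rw [repL, getLast_cons_append, hcl]
      exact c2

end Aux2

section Core
variable {n : ℕ} {A : Fin n → Fin n → ℝ≥0}

lemma kleene_eq (h1 : mcgm A = 1) (γ : ℕ) (x y : Fin n) :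
    kleeneStar (mpow A γ) x y = ⨆ k2, mpow A (γ * k2) x y := by
  rw [kleeneStar]
  congr 1
  funext k2
  rw [mpow_mul]

lemma core_row (h1 : mcgm A = 1) (G : CritSubgraph A) {i : Fin n}
    (hγ : graphCyc G.E ≠ 0) (hi : G.Nc i) (k0 k1 j : Fin n) (t m q : ℕ) :
    mpow A (graphCyc G.E * m) i k0 * (mpow (Smat A G) t k0 k1 * mpow A (graphCyc G.E * q) k1 j)
      ≤ mmul (mpow (Smat A G) t) (Rmat A G) i j := by
  set γ := graphCyc G.E with hγdef
  by_cases z1 : mpow A (γ * m) i k0 = 0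
  · rw [z1, zero_mul]; exact zero_le
  by_cases z2 : mpow (Smat A G) t k0 k1 = 0
  · rw [z2, zero_mul, mul_zero]; exact zero_le
  by_cases z3 : mpow A (γ * q) k1 j = 0
  · rw [z3, mul_zero, mul_zero]; exact zero_le
  obtain ⟨l1, hl1len, hl1last, hl1w⟩ := mpow_exists_walk A (γ*m) i k0 z1
  obtain ⟨l2, hl2len, hl2last, hl2w⟩ := mpow_exists_walk (Smat A G) t k0 k1 z2
  obtain ⟨l3, hl3len, hl3last, hl3w⟩ := mpow_exists_walk A (γ*q) k1 j z3
  have hch2 : List.Chain G.E k0 l2 := chain_of_wW_S_ne G l2 k0 (by rw [hl2w]; exact z2)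
  have hl2A : wW (Smat A G) k0 l2 = wW A k0 l2 := chain_wW_S G l2 k0 hch2
  obtain ⟨c, hcne, hcch, hccl⟩ := Nc_cycle G hi
  have hL1 : 1 ≤ c.length := List.length_pos_iff.mpr hcne
  obtain ⟨hrch, hrcl⟩ := chain_repL hcch hccl (γ * (t+1))
  have hT : (repL (γ * (t+1)) c).length = γ * ((t+1) * c.length) := by
    rw [repL_length]; ring
  have hTt : t ≤ (repL (γ * (t+1)) c).length := by
    have h2 : 1 * (t + 1) ≤ γ * (t+1) :=
      Nat.mul_le_mul_right _ (Nat.one_le_iff_ne_zero.mpr hγ)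
    have h3 : (γ * (t+1)) * 1 ≤ (γ * (t+1)) * c.length := Nat.mul_le_mul_left _ hL1
    rw [repL_length]
    omega
  obtain ⟨ch4, ch5, hmid⟩ := chain_take_drop hrch t hTt
  set l' := (i :: repL (γ * (t+1)) c).getD t i with hl'
  have h5last : (l' :: (repL (γ * (t+1)) c).drop t).getLast (List.cons_ne_nil _ _) = i := by
    rw [hl', getLast_drop_part _ i t hTt]
    exact hrcl
  have hl4len : ((repL (γ * (t+1)) c).take t).length = t := by
    rw [List.length_take]; omega
  have hNcl' : G.Nc l' := by
    rcases hdrop : (repL (γ * (t+1)) c).drop t with _ | ⟨x, l5'⟩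
    · rw [hdrop] at h5last
      rw [show l' = i from by simpa using h5last]
      exact hi
    · rw [hdrop] at ch5
      exact Or.inl ⟨x, (List.chain_cons.mp ch5).1⟩
  have hrepw : wW A i (repL (γ * (t+1)) c) = 1 := crit_closed_eq_one h1 G hrch hrcl
  have hdecompw : wW A i ((repL (γ * (t+1)) c).take t) * wW A l' ((repL (γ * (t+1)) c).drop t)
      = 1 := by
    rw [← hrepw]
    conv_rhs => rw [← List.take_append_drop t (repL (γ * (t+1)) c)]
    rw [wW_append A _ i _, hmid]
  have hBigw : wW A l' ((repL (γ * (t+1)) c).drop t ++ (l1 ++ (l2 ++ l3)))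
      = wW A l' ((repL (γ * (t+1)) c).drop t) * (wW A i l1 * (wW A k0 l2 * wW A k1 l3)) := by
    rw [wW_append A _ l' _, h5last, wW_append A l1 i _, hl1last, wW_append A l2 k0 _, hl2last]
  have hBiglast : (l' :: ((repL (γ * (t+1)) c).drop t ++ (l1 ++ (l2 ++ l3)))).getLast
      (List.cons_ne_nil _ _) = j := by
    rw [getLast_cons_append, h5last, getLast_cons_append, hl1last, getLast_cons_append,
      hl2last, hl3last]
  have hBiglen : ((repL (γ * (t+1)) c).drop t ++ (l1 ++ (l2 ++ l3))).length
      = γ * ((t+1) * c.length + m + q) := by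
    have hd : γ * ((t+1) * c.length + m + q) = γ*((t+1) * c.length) + γ*m + γ*q := by ring
    simp only [List.length_append, List.length_drop, hl1len, hl2len, hl3len]
    omega
  have hwle : wW A l' ((repL (γ * (t+1)) c).drop t ++ (l1 ++ (l2 ++ l3)))
      ≤ mpow A (γ * ((t+1) * c.length + m + q)) l' j := by
    have h := walk_le_mpow A ((repL (γ * (t+1)) c).drop t ++ (l1 ++ (l2 ++ l3))) l'
    rw [hBiglast, hBiglen] at h
    exact h
  have hRm : wW A l' ((repL (γ * (t+1)) c).drop t ++ (l1 ++ (l2 ++ l3))) ≤ Rmat A G l' j := by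
    show _ ≤ (if G.Nc l' then kleeneStar (mpow A γ) l' j else 0)
    rw [if_pos hNcl', kleene_eq h1]
    exact le_trans hwle (le_ciSup (bdd_mpow h1 (fun k2 => γ*k2) l' j) ((t+1) * c.length + m + q))
  have hSle : wW A i ((repL (γ * (t+1)) c).take t) ≤ mpow (Smat A G) t i l' := by
    have h := walk_le_mpow (Smat A G) ((repL (γ * (t+1)) c).take t) i
    rw [chain_wW_S G _ i ch4, hl4len, hmid] at h
    exact h
  calc mpow A (γ*m) i k0 * (mpow (Smat A G) t k0 k1 * mpow A (γ*q) k1 j)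
      = wW A i l1 * (wW A k0 l2 * wW A k1 l3) := by rw [hl1w, hl3w, ← hl2w, hl2A]
    _ = (wW A i ((repL (γ * (t+1)) c).take t) * wW A l' ((repL (γ * (t+1)) c).drop t))
        * (wW A i l1 * (wW A k0 l2 * wW A k1 l3)) := by rw [hdecompw, one_mul]
    _ = wW A i ((repL (γ * (t+1)) c).take t)
        * wW A l' ((repL (γ * (t+1)) c).drop t ++ (l1 ++ (l2 ++ l3))) := by rw [hBigw]; ring
    _ ≤ mpow (Smat A G) t i l' * Rmat A G l' j := mul_le_mul' hSle hRm
    _ ≤ mmul (mpow (Smat A G) t) (Rmat A G) i j :=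
        Finset.le_sup (f := fun k => mpow (Smat A G) t i k * Rmat A G k j) (Finset.mem_univ l')

lemma core_col (h1 : mcgm A = 1) (G : CritSubgraph A) {i : Fin n}
    (hγ : graphCyc G.E ≠ 0) (hi : G.Nc i) (j k0 k1 : Fin n) (t m q : ℕ) :
    (mpow A (graphCyc G.E * m) j k0 * mpow (Smat A G) t k0 k1) * mpow A (graphCyc G.E * q) k1 i
      ≤ mmul (Cmat A G) (mpow (Smat A G) t) j i := by
  set γ := graphCyc G.E with hγdef
  by_cases z1 : mpow A (γ * m) j k0 = 0
  · rw [z1, zero_mul, zero_mul]; exact zero_le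
  by_cases z2 : mpow (Smat A G) t k0 k1 = 0
  · rw [z2, mul_zero, zero_mul]; exact zero_le
  by_cases z3 : mpow A (γ * q) k1 i = 0
  · rw [z3, mul_zero]; exact zero_le
  obtain ⟨l1, hl1len, hl1last, hl1w⟩ := mpow_exists_walk A (γ*m) j k0 z1
  obtain ⟨l2, hl2len, hl2last, hl2w⟩ := mpow_exists_walk (Smat A G) t k0 k1 z2
  obtain ⟨l3, hl3len, hl3last, hl3w⟩ := mpow_exists_walk A (γ*q) k1 i z3
  have hch2 : List.Chain G.E k0 l2 := chain_of_wW_S_ne G l2 k0 (by rw [hl2w]; exact z2)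
  have hl2A : wW (Smat A G) k0 l2 = wW A k0 l2 := chain_wW_S G l2 k0 hch2
  obtain ⟨c, hcne, hcch, hccl⟩ := Nc_cycle G hi
  have hL1 : 1 ≤ c.length := List.length_pos_iff.mpr hcne
  obtain ⟨hrch, hrcl⟩ := chain_repL hcch hccl (γ * (t+1))
  have hT : (repL (γ * (t+1)) c).length = γ * ((t+1) * c.length) := by
    rw [repL_length]; ring
  have hTt : t ≤ (repL (γ * (t+1)) c).length := by
    have h2 : 1 * (t + 1) ≤ γ * (t+1) :=
      Nat.mul_le_mul_right _ (Nat.one_le_iff_ne_zero.mpr hγ)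
    have h3 : (γ * (t+1)) * 1 ≤ (γ * (t+1)) * c.length := Nat.mul_le_mul_left _ hL1
    rw [repL_length]
    omega
  have hs0 : (repL (γ * (t+1)) c).length - t ≤ (repL (γ * (t+1)) c).length := by omega
  obtain ⟨ch4, ch5, hmid⟩ := chain_take_drop hrch ((repL (γ * (t+1)) c).length - t) hs0
  set l' := (i :: repL (γ * (t+1)) c).getD ((repL (γ * (t+1)) c).length - t) i with hl'
  have h5last : (l' :: (repL (γ * (t+1)) c).drop ((repL (γ * (t+1)) c).length - t)).getLast
      (List.cons_ne_nil _ _) = i := by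
    rw [hl', getLast_drop_part _ i _ hs0]
    exact hrcl
  have hl4len : ((repL (γ * (t+1)) c).take ((repL (γ * (t+1)) c).length - t)).length
      = (repL (γ * (t+1)) c).length - t := by
    rw [List.length_take]; omega
  have hl5len : ((repL (γ * (t+1)) c).drop ((repL (γ * (t+1)) c).length - t)).length = t := by
    rw [List.length_drop]; omega
  have hNcl' : G.Nc l' := by
    rcases hdrop : (repL (γ * (t+1)) c).drop ((repL (γ * (t+1)) c).length - t)
        with _ | ⟨x, l5'⟩
    · rw [hdrop] at h5last
      rw [show l' = i from by simpa using h5last]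
      exact hi
    · rw [hdrop] at ch5
      exact Or.inl ⟨x, (List.chain_cons.mp ch5).1⟩
  have hrepw : wW A i (repL (γ * (t+1)) c) = 1 := crit_closed_eq_one h1 G hrch hrcl
  have hdecompw : wW A i ((repL (γ * (t+1)) c).take ((repL (γ * (t+1)) c).length - t))
      * wW A l' ((repL (γ * (t+1)) c).drop ((repL (γ * (t+1)) c).length - t)) = 1 := by
    rw [← hrepw]
    conv_rhs => rw [← List.take_append_drop ((repL (γ * (t+1)) c).length - t)
      (repL (γ * (t+1)) c)]
    rw [wW_append A _ i _, hmid]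
  have hBigw : wW A j (l1 ++ (l2 ++ (l3 ++
        (repL (γ * (t+1)) c).take ((repL (γ * (t+1)) c).length - t))))
      = wW A j l1 * (wW A k0 l2 * (wW A k1 l3
        * wW A i ((repL (γ * (t+1)) c).take ((repL (γ * (t+1)) c).length - t)))) := by
    rw [wW_append A l1 j _, hl1last, wW_append A l2 k0 _, hl2last, wW_append A l3 k1 _, hl3last]
  have hBiglast : (j :: (l1 ++ (l2 ++ (l3 ++
        (repL (γ * (t+1)) c).take ((repL (γ * (t+1)) c).length - t))))).getLast
      (List.cons_ne_nil _ _) = l' := by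
    rw [getLast_cons_append, hl1last, getLast_cons_append, hl2last, getLast_cons_append,
      hl3last, hmid]
  have hBiglen : (l1 ++ (l2 ++ (l3 ++
        (repL (γ * (t+1)) c).take ((repL (γ * (t+1)) c).length - t)))).length
      = γ * ((t+1) * c.length + m + q) := by
    have hd : γ * ((t+1) * c.length + m + q) = γ*((t+1) * c.length) + γ*m + γ*q := by ring
    simp only [List.length_append, List.length_take, hl1len, hl2len, hl3len]
    omega
  have hwle : wW A j (l1 ++ (l2 ++ (l3 ++
        (repL (γ * (t+1)) c).take ((repL (γ * (t+1)) c).length - t))))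
      ≤ mpow A (γ * ((t+1) * c.length + m + q)) j l' := by
    have h := walk_le_mpow A (l1 ++ (l2 ++ (l3 ++
      (repL (γ * (t+1)) c).take ((repL (γ * (t+1)) c).length - t)))) j
    rw [hBiglast, hBiglen] at h
    exact h
  have hCm : wW A j (l1 ++ (l2 ++ (l3 ++
        (repL (γ * (t+1)) c).take ((repL (γ * (t+1)) c).length - t)))) ≤ Cmat A G j l' := by
    show _ ≤ (if G.Nc l' then kleeneStar (mpow A γ) j l' else 0)
    rw [if_pos hNcl', kleene_eq h1]
    exact le_trans hwle (le_ciSup (bdd_mpow h1 (fun k2 => γ*k2) j l') ((t+1) * c.length + m + q))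
  have hSle : wW A l' ((repL (γ * (t+1)) c).drop ((repL (γ * (t+1)) c).length - t))
      ≤ mpow (Smat A G) t l' i := by
    have h := walk_le_mpow (Smat A G)
      ((repL (γ * (t+1)) c).drop ((repL (γ * (t+1)) c).length - t)) l'
    rw [chain_wW_S G _ l' ch5, hl5len, h5last] at h
    exact h
  calc (mpow A (γ*m) j k0 * mpow (Smat A G) t k0 k1) * mpow A (γ*q) k1 i
      = wW A j l1 * (wW A k0 l2 * wW A k1 l3) := by rw [hl1w, hl3w, ← hl2w, hl2A]; ring
    _ = (wW A j l1 * (wW A k0 l2 * wW A k1 l3))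
        * (wW A i ((repL (γ * (t+1)) c).take ((repL (γ * (t+1)) c).length - t))
          * wW A l' ((repL (γ * (t+1)) c).drop ((repL (γ * (t+1)) c).length - t))) := by
        rw [hdecompw, mul_one]
    _ = wW A j (l1 ++ (l2 ++ (l3 ++
          (repL (γ * (t+1)) c).take ((repL (γ * (t+1)) c).length - t))))
        * wW A l' ((repL (γ * (t+1)) c).drop ((repL (γ * (t+1)) c).length - t)) := by
        rw [hBigw]; ring
    _ ≤ Cmat A G j l' * mpow (Smat A G) t l' i := mul_le_mul' hCm hSle
    _ ≤ mmul (Cmat A G) (mpow (Smat A G) t) j i :=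
        Finset.le_sup (f := fun k => Cmat A G j k * mpow (Smat A G) t k i) (Finset.mem_univ l')

theorem csr_critical_rows_cols_aux {n : ℕ} (A : Fin n → Fin n → ℝ≥0) (h1 : mcgm A = 1)
    (G : CritSubgraph A) (i : Fin n) (hi : G.Nc i) (t : ℕ) :
    (∀ j, csr A G t i j = mmul (mpow (Smat A G) t) (Rmat A G) i j) ∧
    (∀ j, csr A G t j i = mmul (Cmat A G) (mpow (Smat A G) t) j i) := by
  by_cases hγ : graphCyc G.E = 0
  · -- degenerate case: the Kleene star is the identity matrix
    have hB0 : ∀ k2 : ℕ, mpow (mpow A 0) k2 = mpow A 0 := by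
      intro k2
      induction k2 with
      | zero => rfl
      | succ k2 ih => rw [mpow_succ, ih]; exact mmul_id_left' (mpow A 0) A
    have hK0 : ∀ x y : Fin n, kleeneStar (mpow A (graphCyc G.E)) x y = mpow A 0 x y := by
      intro x y
      rw [hγ]
      calc (⨆ k2 : ℕ, mpow (mpow A 0) k2 x y) = ⨆ _ : ℕ, mpow A 0 x y := by
            congr 1; funext k2; rw [hB0]
        _ = mpow A 0 x y := ciSup_const
    constructor
    · intro j
      rw [csr, mmul_assoc]
      apply le_antisymm
      · show Finset.univ.sup (fun k => Cmat A G i k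
            * mmul (mpow (Smat A G) t) (Rmat A G) k j) ≤ _
        apply Finset.sup_le
        intro k0 _
        simp only [Cmat]
        by_cases hk0 : G.Nc k0
        · rw [if_pos hk0, hK0]
          by_cases hik : i = k0
          · subst hik
            rw [show mpow A 0 i i = 1 by simp [mpow], one_mul]
          · rw [show mpow A 0 i k0 = 0 by simp [mpow, hik], zero_mul]
            exact zero_le
        · rw [if_neg hk0, zero_mul]
          exact zero_le
      · have hle := Finset.le_sup (f := fun k => Cmat A G i k
          * mmul (mpow (Smat A G) t) (Rmat A G) k j) (Finset.mem_univ i)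
        calc mmul (mpow (Smat A G) t) (Rmat A G) i j
            = Cmat A G i i * mmul (mpow (Smat A G) t) (Rmat A G) i j := by
              simp only [Cmat, if_pos hi, hK0]
              rw [show mpow A 0 i i = 1 by simp [mpow], one_mul]
          _ ≤ _ := hle
    · intro j
      rw [csr]
      apply le_antisymm
      · show Finset.univ.sup (fun l => mmul (Cmat A G) (mpow (Smat A G) t) j l
            * Rmat A G l i) ≤ _
        apply Finset.sup_le
        intro l _
        simp only [Rmat]
        by_cases hl : G.Nc l
        · rw [if_pos hl, hK0]
          by_cases hli : l = i
          · subst hli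
            rw [show mpow A 0 l l = 1 by simp [mpow], mul_one]
          · rw [show mpow A 0 l i = 0 by simp [mpow, hli], mul_zero]
            exact zero_le
        · rw [if_neg hl, mul_zero]
          exact zero_le
      · have hle := Finset.le_sup (f := fun l => mmul (Cmat A G) (mpow (Smat A G) t) j l
          * Rmat A G l i) (Finset.mem_univ i)
        calc mmul (Cmat A G) (mpow (Smat A G) t) j i
            = mmul (Cmat A G) (mpow (Smat A G) t) j i * Rmat A G i i := by
              simp only [Rmat, if_pos hi, hK0]
              rw [show mpow A 0 i i = 1 by simp [mpow], mul_one]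
          _ ≤ _ := hle
  · -- main case
    have hC1 : 1 ≤ Cmat A G i i := by
      simp only [Cmat, if_pos hi, kleene_eq h1]
      have h := le_ciSup (bdd_mpow h1 (fun k2 => graphCyc G.E * k2) i i) 0
      rw [Nat.mul_zero] at h
      calc (1:ℝ≥0) = mpow A 0 i i := by simp [mpow]
        _ ≤ _ := h
    have hR1 : 1 ≤ Rmat A G i i := by
      simp only [Rmat, if_pos hi, kleene_eq h1]
      have h := le_ciSup (bdd_mpow h1 (fun k2 => graphCyc G.E * k2) i i) 0
      rw [Nat.mul_zero] at h
      calc (1:ℝ≥0) = mpow A 0 i i := by simp [mpow]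
        _ ≤ _ := h
    constructor
    · intro j
      rw [csr, mmul_assoc]
      apply le_antisymm
      · show Finset.univ.sup (fun k => Cmat A G i k
            * mmul (mpow (Smat A G) t) (Rmat A G) k j) ≤ _
        apply Finset.sup_le
        intro k0 _
        simp only [Cmat]
        by_cases hk0 : G.Nc k0
        swap
        · rw [if_neg hk0, zero_mul]; exact zero_le
        rw [if_pos hk0, kleene_eq h1]
        apply iSup_mul_le
        intro m
        rw [show mmul (mpow (Smat A G) t) (Rmat A G) k0 j
          = Finset.univ.sup (fun k1 => mpow (Smat A G) t k0 k1 * Rmat A G k1 j) from rfl,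
          mul_fsup]
        apply Finset.sup_le
        intro k1 _
        simp only [Rmat]
        by_cases hk1 : G.Nc k1
        swap
        · rw [if_neg hk1, mul_zero, mul_zero]; exact zero_le
        rw [if_pos hk1, kleene_eq h1, ← mul_assoc]
        apply mul_iSup_le
        intro q
        rw [mul_assoc]
        exact core_row h1 G hγ hi k0 k1 j t m q
      · have hle := Finset.le_sup (f := fun k => Cmat A G i k
          * mmul (mpow (Smat A G) t) (Rmat A G) k j) (Finset.mem_univ i)
        calc mmul (mpow (Smat A G) t) (Rmat A G) i j
            = 1 * mmul (mpow (Smat A G) t) (Rmat A G) i j := (one_mul _).symm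
          _ ≤ Cmat A G i i * mmul (mpow (Smat A G) t) (Rmat A G) i j :=
              mul_le_mul_left hC1 _
          _ ≤ _ := hle
    · intro j
      rw [csr]
      apply le_antisymm
      · show Finset.univ.sup (fun l => mmul (Cmat A G) (mpow (Smat A G) t) j l
            * Rmat A G l i) ≤ _
        apply Finset.sup_le
        intro l _
        simp only [Rmat]
        by_cases hl : G.Nc l
        swap
        · rw [if_neg hl, mul_zero]; exact zero_le
        rw [if_pos hl, kleene_eq h1]
        apply mul_iSup_le
        intro q
        rw [show mmul (Cmat A G) (mpow (Smat A G) t) j l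
          = Finset.univ.sup (fun k => Cmat A G j k * mpow (Smat A G) t k l) from rfl,
          fsup_mul]
        apply Finset.sup_le
        intro k _
        simp only [Cmat]
        by_cases hk : G.Nc k
        swap
        · rw [if_neg hk, zero_mul, zero_mul]; exact zero_le
        rw [if_pos hk, kleene_eq h1, mul_assoc]
        apply iSup_mul_le
        intro m
        rw [← mul_assoc]
        exact core_col h1 G hγ hi j k l t m q
      · have hle := Finset.le_sup (f := fun l => mmul (Cmat A G) (mpow (Smat A G) t) j l
          * Rmat A G l i) (Finset.mem_univ i)
        calc mmul (Cmat A G) (mpow (Smat A G) t) j i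
            = mmul (Cmat A G) (mpow (Smat A G) t) j i * 1 := (mul_one _).symm
          _ ≤ mmul (Cmat A G) (mpow (Smat A G) t) j i * Rmat A G i i :=
              mul_le_mul_right hR1 _
          _ ≤ _ := hle

end Core

/-- for a critical node `i ∈ N_c` and any `t ≥ 0`, the `i`-th row
of `P^(t)` equals the `i`-th row of `S^t ⊗ R`, and the `i`-th column of `P^(t)`
equals the `i`-th column of `C ⊗ S^t`. -/
theorem csr_critical_rows_cols {n : ℕ} (A : Fin n → Fin n → ℝ≥0) (h1 : mcgm A = 1)
    (G : CritSubgraph A) (i : Fin n) (hi : G.Nc i) (t : ℕ) :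
    (∀ j, csr A G t i j = mmul (mpow (Smat A G) t) (Rmat A G) i j) ∧
    (∀ j, csr A G t j i = mmul (Cmat A G) (mpow (Smat A G) t) j i) :=
  csr_critical_rows_cols_aux A h1 G i hi t

end MaxAlg
end

section
/- Let A ∈ ℝ≥0^{n×n} with λ(A) = 1 and let P^(t) = C ⊗ S^t ⊗ R be the CSR product associated with a completely reducible subgraph C of the critical graph. Then for all t ≥ 0 and all i, j, the maximum weight of all paths of length t from i to j in D(A) that pass through at least one node of C is at most P^(t)_{ij}. -/
open scoped NNReal Classical

namespace MaxAlg

/-! ### ℕ-indexed walks -/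

/-- weight of the first `L` steps of the infinite walk `f`. -/
noncomputable def nw {n : ℕ} (A : Fin n → Fin n → ℝ≥0) (f : ℕ → Fin n) (L : ℕ) : ℝ≥0 :=
  ∏ m ∈ Finset.range L, A (f m) (f (m+1))

lemma nw_add {n : ℕ} (A : Fin n → Fin n → ℝ≥0) (f : ℕ → Fin n) (k l : ℕ) :
    nw A f (k + l) = nw A f k * nw A (fun m => f (k + m)) l := by
  unfold nw
  rw [Finset.prod_range_add]
  congr 1

/-- convert a `Fin`-walk to an `ℕ`-walk -/
def ext {n : ℕ} (t : ℕ) (p : Fin (t+1) → Fin n) : ℕ → Fin n :=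
  fun m => p ⟨min m t, Nat.lt_succ_of_le (min_le_right _ _)⟩

lemma ext_eq {n : ℕ} (t : ℕ) (p : Fin (t+1) → Fin n) (m : ℕ) (hm : m ≤ t) :
    ext t p m = p ⟨m, Nat.lt_succ_of_le hm⟩ := by
  unfold ext; congr 1; exact Fin.ext (by simp [Nat.min_eq_left hm])

lemma pathWeight_eq_nw {n : ℕ} (A : Fin n → Fin n → ℝ≥0) (t : ℕ) (p : Fin (t+1) → Fin n) :
    pathWeight A t p = nw A (ext t p) t := by
  unfold pathWeight nw
  rw [← Fin.prod_univ_eq_prod_range (fun m => A (ext t p m) (ext t p (m+1)))]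
  apply Finset.prod_congr rfl
  intro x _
  rw [ext_eq t p x.val (le_of_lt x.isLt), ext_eq t p (x.val+1) x.isLt]
  rfl

lemma nw_eq_pathWeight {n : ℕ} (A : Fin n → Fin n → ℝ≥0) (L : ℕ) (f : ℕ → Fin n) :
    nw A f L = pathWeight A L (fun s : Fin (L+1) => f s.val) := by
  unfold pathWeight nw
  rw [← Fin.prod_univ_eq_prod_range (fun m => A (f m) (f (m+1)))]
  rfl

/-- Any walk weight is at most the corresponding power entry. -/
lemma nw_le_mpow {n : ℕ} (A : Fin n → Fin n → ℝ≥0) :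
    ∀ (L : ℕ) (f : ℕ → Fin n), nw A f L ≤ mpow A L (f 0) (f L) := by
  intro L
  induction L with
  | zero => intro f; simp [nw, mpow]
  | succ L ih =>
    intro f
    have h1 : nw A f (1 + L) = nw A f 1 * nw A (fun m => f (1+m)) L := nw_add A f 1 L
    rw [Nat.add_comm 1 L] at h1
    rw [h1]
    have h2 : nw A f 1 = A (f 0) (f 1) := by simp [nw]
    rw [h2]
    have h3 := ih (fun m => f (1+m))
    have : A (f 0) (f 1) * nw A (fun m => f (1+m)) L ≤
        A (f 0) (f 1) * mpow A L (f 1) (f (1+L)) := by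
      exact mul_le_mul_right (by simpa using h3) _
    refine this.trans ?_
    show _ ≤ mmul A (mpow A L) (f 0) (f (L+1))
    have : f (1 + L) = f (L+1) := by rw [Nat.add_comm]
    rw [this]
    exact Finset.le_sup (f := fun k => A (f 0) k * mpow A L k (f (L+1))) (Finset.mem_univ (f 1))

/-- Attainment: every power entry is 0 or a walk weight. -/
lemma mpow_attain {n : ℕ} (A : Fin n → Fin n → ℝ≥0) :
    ∀ (L : ℕ) (i j : Fin n), mpow A L i j = 0 ∨
      ∃ f : ℕ → Fin n, f 0 = i ∧ f L = j ∧ mpow A L i j = nw A f L := by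
  intro L
  induction L with
  | zero =>
    intro i j
    by_cases h : i = j
    · subst h; right; exact ⟨fun _ => i, rfl, rfl, by simp [nw, mpow]⟩
    · left; simp [mpow, h]
  | succ L ih =>
    intro i j
    have hne : (Finset.univ : Finset (Fin n)).Nonempty := ⟨i, Finset.mem_univ i⟩
    obtain ⟨k0, _, hk0⟩ := Finset.exists_mem_eq_sup Finset.univ hne
      (fun k => A i k * mpow A L k j)
    rcases ih k0 j with h0 | ⟨f, hf0, hfL, hfw⟩
    · left; show (Finset.univ.sup fun k => A i k * mpow A L k j) = 0
      rw [hk0, h0, mul_zero]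
    · right
      refine ⟨fun m => if m = 0 then i else f (m - 1), rfl, by simp [hfL], ?_⟩
      show (Finset.univ.sup fun k => A i k * mpow A L k j) = _
      rw [hk0, hfw]
      have : nw A (fun m => if m = 0 then i else f (m-1)) (L+1)
          = A i (f 0) * nw A f L := by
        rw [Nat.add_comm L 1, nw_add]
        congr 1
        · simp [nw]
        · unfold nw; apply Finset.prod_congr rfl; intro x _; simp
      rw [this, hf0]


/-! ### mcgm facts -/

lemma mcgm_bddAbove {n : ℕ} (A : Fin n → Fin n → ℝ≥0) :
    BddAbove {x | ∃ k : ℕ, 0 < k ∧ k ≤ n ∧ ∃ p : Fin (k+1) → Fin n,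
      p 0 = p (Fin.last k) ∧ x = pathWeight A k p ^ ((1 : ℝ) / (k : ℝ))} := by
  apply Set.Finite.bddAbove
  have hsub : {x | ∃ k : ℕ, 0 < k ∧ k ≤ n ∧ ∃ p : Fin (k+1) → Fin n,
      p 0 = p (Fin.last k) ∧ x = pathWeight A k p ^ ((1 : ℝ) / (k : ℝ))} ⊆
      ⋃ k ∈ Set.Iic n, Set.range (fun p : Fin (k+1) → Fin n =>
        pathWeight A k p ^ ((1 : ℝ) / (k : ℝ))) := by
    rintro x ⟨k, _, hkn, p, _, rfl⟩
    exact Set.mem_biUnion hkn ⟨p, rfl⟩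
  exact Set.Finite.subset (Set.Finite.biUnion (Set.finite_Iic n)
    (fun k _ => Set.finite_range _)) hsub

lemma rpow_oneDiv_le_one {x : ℝ≥0} {k : ℕ} (hk : 0 < k)
    (h : x ^ ((1:ℝ)/(k:ℝ)) ≤ 1) : x ≤ 1 := by
  have hk' : (k:ℝ) ≠ 0 := Nat.cast_ne_zero.mpr hk.ne'
  have : x = (x ^ ((1:ℝ)/(k:ℝ))) ^ (k:ℝ) := by
    rw [← NNReal.rpow_mul, one_div, inv_mul_cancel₀ hk', NNReal.rpow_one]
  rw [this]
  exact NNReal.rpow_le_one h (by positivity)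

lemma rpow_oneDiv_eq_one {x : ℝ≥0} {k : ℕ} (hk : 0 < k)
    (h : x ^ ((1:ℝ)/(k:ℝ)) = 1) : x = 1 := by
  have hk' : (k:ℝ) ≠ 0 := Nat.cast_ne_zero.mpr hk.ne'
  have : x = (x ^ ((1:ℝ)/(k:ℝ))) ^ (k:ℝ) := by
    rw [← NNReal.rpow_mul, one_div, inv_mul_cancel₀ hk', NNReal.rpow_one]
  rw [this, h, NNReal.one_rpow]

/-- splice lemma: a walk longer than `n` contains a nontrivial closed subwalk
whose removal splits the weight multiplicatively. -/
lemma splice_s12 {n : ℕ} (A : Fin n → Fin n → ℝ≥0) (L : ℕ) (f : ℕ → Fin n) (hL : n < L) :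
    ∃ (d : ℕ) (g h : ℕ → Fin n), 0 < d ∧ d ≤ n ∧
      g 0 = f 0 ∧ g (L - d) = f L ∧ h 0 = h d ∧
      nw A f L = nw A g (L - d) * nw A h d := by
  have hn : 0 < n := Nat.pos_of_ne_zero (by rintro rfl; exact (f 0).elim0)
  have key : ∀ s1 s2 : ℕ, s1 < s2 → s2 ≤ n → f s1 = f s2 →
      ∃ (d : ℕ) (g h : ℕ → Fin n), 0 < d ∧ d ≤ n ∧
      g 0 = f 0 ∧ g (L - d) = f L ∧ h 0 = h d ∧
      nw A f L = nw A g (L - d) * nw A h d := by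
    intro s1 s2 h12 h2n hfe
    refine ⟨s2 - s1, (fun m => if m < s1 then f m else f (m + (s2 - s1))),
      (fun m => f (s1 + m)), by omega, by omega, ?_, ?_, ?_, ?_⟩
    · by_cases h0 : 0 < s1
      · simp [h0]
      · have h1 : s1 = 0 := by omega
        subst h1
        simp only [if_neg (lt_irrefl 0), Nat.zero_add, Nat.sub_zero]
        exact hfe.symm
    · simp only [if_neg (by omega : ¬ (L - (s2 - s1) < s1))]
      congr 1; omega
    · show f (s1 + 0) = f (s1 + (s2 - s1))
      rw [Nat.add_zero, show s1 + (s2 - s1) = s2 from by omega]; exact hfe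
    · have e1 : L = s1 + ((s2 - s1) + (L - s2)) := by omega
      have e2 : L - (s2 - s1) = s1 + (L - s2) := by omega
      conv_lhs => rw [e1]
      rw [nw_add, nw_add, e2, nw_add]
      have c1 : nw A (fun m => if m < s1 then f m else f (m + (s2 - s1))) s1
          = nw A f s1 := by
        unfold nw; apply Finset.prod_congr rfl; intro m hm
        rw [Finset.mem_range] at hm
        have g1 : (if m < s1 then f m else f (m + (s2 - s1))) = f m := if_pos hm
        have g2 : (if m + 1 < s1 then f (m+1) else f (m + 1 + (s2 - s1))) = f (m+1) := by
          by_cases h : m + 1 < s1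
          · exact if_pos h
          · rw [if_neg h, show m + 1 + (s2 - s1) = s2 from by omega, ← hfe,
              show s1 = m + 1 from by omega]
        simp only [g1, g2]
      have c2 : nw A (fun m => (fun m => if m < s1 then f m
            else f (m + (s2 - s1))) (s1 + m)) (L - s2)
          = nw A (fun m => f (s1 + ((s2 - s1) + m))) (L - s2) := by
        unfold nw; apply Finset.prod_congr rfl; intro m hm
        simp only [if_neg (by omega : ¬ s1 + m < s1),
          if_neg (by omega : ¬ s1 + (m + 1) < s1)]
        rw [show s1 + m + (s2 - s1) = s1 + ((s2 - s1) + m) from by omega,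
          show s1 + (m + 1) + (s2 - s1) = s1 + ((s2 - s1) + (m + 1)) from by omega]
      rw [c1, c2]; ring
  have hcard : Fintype.card (Fin n) < Fintype.card (Fin (n+1)) := by simp
  obtain ⟨a, b, hab, he⟩ := Fintype.exists_ne_map_eq_of_card_lt
    (fun s : Fin (n+1) => f s.val) hcard
  have hab' : a.val ≠ b.val := fun h => hab (Fin.ext h)
  rcases hab'.lt_or_gt with hlt | hlt
  · exact key a.val b.val hlt (by omega) he
  · exact key b.val a.val hlt (by omega) he.symm


/-! ### closed walks have weight ≤ 1 -/

lemma closed_nw_le_one {n : ℕ} (A : Fin n → Fin n → ℝ≥0) (h1 : mcgm A = 1) :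
    ∀ (L : ℕ) (f : ℕ → Fin n), f 0 = f L → nw A f L ≤ 1 := by
  intro L
  induction L using Nat.strong_induction_on with
  | _ L ih =>
    intro f hf
    rcases Nat.eq_zero_or_pos L with rfl | hL
    · simp [nw]
    rcases le_or_gt L n with hLn | hLn
    · have hx : nw A f L ^ ((1:ℝ)/(L:ℝ)) ∈ {x | ∃ k : ℕ, 0 < k ∧ k ≤ n ∧
          ∃ p : Fin (k+1) → Fin n, p 0 = p (Fin.last k) ∧
          x = pathWeight A k p ^ ((1 : ℝ) / (k : ℝ))} := by
        refine ⟨L, hL, hLn, fun s : Fin (L+1) => f s.val, ?_, ?_⟩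
        · show f ((0 : Fin (L+1)) : ℕ) = f ((Fin.last L : Fin (L+1)) : ℕ)
          simpa using hf
        · rw [← nw_eq_pathWeight]
      have hle : nw A f L ^ ((1:ℝ)/(L:ℝ)) ≤ mcgm A := le_csSup (mcgm_bddAbove A) hx
      rw [h1] at hle
      exact rpow_oneDiv_le_one hL hle
    · obtain ⟨d, g, h, hd0, hdn, hg0, hgL, hh, hw⟩ := splice_s12 A L f hLn
      have ih1 := ih (L - d) (by omega) g (by rw [hg0, hgL, hf])
      have ih2 := ih d (by omega) h hh
      rw [hw]
      exact mul_le_one' ih1 ih2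

/-- windows of a periodic positive sequence all have the same product. -/
lemma window_prod (T : ℕ → ℝ≥0) (k : ℕ) (hT : ∀ m, T (m + k) = T m)
    (hnz : ∀ m, T m ≠ 0) :
    ∀ a, ∏ m ∈ Finset.range k, T (a + m) = ∏ m ∈ Finset.range k, T m := by
  intro a
  induction a with
  | zero => simp
  | succ a ih =>
    have key : (∏ m ∈ Finset.range k, T (a + 1 + m)) * T a
        = (∏ m ∈ Finset.range k, T (a + m)) * T (a + k) := by
      have h1 : ∏ m ∈ Finset.range (k+1), T (a + m)
          = (∏ m ∈ Finset.range k, T (a + (m+1))) * T (a + 0) :=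
        Finset.prod_range_succ' (fun m => T (a + m)) k
      have h2 : ∏ m ∈ Finset.range (k+1), T (a + m)
          = (∏ m ∈ Finset.range k, T (a + m)) * T (a + k) :=
        Finset.prod_range_succ (fun m => T (a + m)) k
      rw [← h2, h1]
      congr 1
      · apply Finset.prod_congr rfl; intro m _; congr 1; omega
    rw [hT a] at key
    have := mul_right_cancel₀ (hnz a) key
    rw [this, ih]

lemma periodic_block {α : Sort*} (T : ℕ → α) (k : ℕ) (hT : ∀ m, T (m + k) = T m) :
    ∀ q m, T (m + q * k) = T m := by
  intro q
  induction q with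
  | zero => simp
  | succ q ih => intro m; rw [Nat.succ_mul, ← Nat.add_assoc, hT]; exact ih m

/-- complement of a critical edge: a return walk whose weight is the exact
inverse of the edge weight. -/
lemma crit_complement {n : ℕ} (A : Fin n → Fin n → ℝ≥0) (h1 : mcgm A = 1)
    {i j : Fin n} (hij : IsCriticalEdge A i j) :
    ∃ (K : ℕ) (g : ℕ → Fin n), g 0 = j ∧ g K = i ∧ nw A g K * A i j = 1 := by
  obtain ⟨k, hk, hkn, p, hcl, hcr, t, hti, htj⟩ := hij
  set φ : ℕ → Fin n := fun m => p ⟨m % k, Nat.lt_succ_of_lt (Nat.mod_lt m hk)⟩ with hφdef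
  set T : ℕ → ℝ≥0 := fun m => A (φ m) (φ (m+1)) with hTdef
  have hφp : ∀ m, φ (m + k) = φ m := by
    intro m; simp only [hφdef, Nat.add_mod_right]
  have hT : ∀ m, T (m + k) = T m := by
    intro m
    simp only [hTdef]
    rw [hφp, show m + k + 1 = (m + 1) + k from by omega, hφp]
  have hφval : ∀ m (hm : m ≤ k), φ m = p ⟨m, Nat.lt_succ_of_le hm⟩ := by
    intro m hm
    rcases lt_or_eq_of_le hm with hm' | rfl
    · simp only [hφdef]; congr 1; exact Fin.ext (by simp [Nat.mod_eq_of_lt hm'])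
    · simp only [hφdef]
      have h0 : (⟨m % m, Nat.lt_succ_of_lt (Nat.mod_lt m hk)⟩ : Fin (m+1)) = 0 :=
        Fin.ext (by simp)
      rw [h0, hcl]
      congr 1
  have hone : ∏ m ∈ Finset.range k, T m = 1 := by
    have hw : pathWeight A k p = 1 := rpow_oneDiv_eq_one hk (h1 ▸ hcr)
    rw [← hw]
    unfold pathWeight
    rw [← Fin.prod_univ_eq_prod_range (fun m => T m) k]
    apply Finset.prod_congr rfl
    intro x _
    simp only [hTdef]
    have e1 : φ x.val = p x.castSucc := by
      rw [hφval x.val (le_of_lt x.isLt)]; congr 1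
    have e2 : φ (x.val + 1) = p x.succ := by
      rw [hφval (x.val + 1) x.isLt]; congr 1
    rw [e1, e2]
  have hnz : ∀ m, T m ≠ 0 := by
    intro m h0
    have hmod : T (m % k) = T m := by
      conv_rhs => rw [show m = m % k + (m / k) * k from by
        rw [Nat.mod_add_div']]
      rw [periodic_block T k hT]
    have : ∏ mm ∈ Finset.range k, T mm = 0 :=
      Finset.prod_eq_zero (Finset.mem_range.mpr (Nat.mod_lt m hk)) (hmod.trans h0 ▸ rfl)
    rw [hone] at this
    exact one_ne_zero this
  refine ⟨k - 1, fun m => φ (t.val + 1 + m), ?_, ?_, ?_⟩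
  · show φ (t.val + 1 + 0) = j
    rw [Nat.add_zero, hφval (t.val + 1) t.isLt, ← htj]
    congr 1
  · show φ (t.val + 1 + (k - 1)) = i
    rw [show t.val + 1 + (k - 1) = t.val + k from by omega, hφp,
      hφval t.val (le_of_lt t.isLt), ← hti]
    congr 1
  · have hA : A i j = T t.val := by
      simp only [hTdef]
      have e1 : φ t.val = p t.castSucc := by
        rw [hφval t.val (le_of_lt t.isLt)]; congr 1
      have e2 : φ (t.val + 1) = p t.succ := by
        rw [hφval (t.val + 1) t.isLt]; congr 1
      rw [e1, e2, hti, htj]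
    have hnw : nw A (fun m => φ (t.val + 1 + m)) (k - 1)
        = ∏ m ∈ Finset.range (k-1), T (t.val + 1 + m) := by
      unfold nw
      apply Finset.prod_congr rfl
      intro m _
      rfl
    rw [hA, hnw]
    have hsplit : ∏ m ∈ Finset.range k, T (t.val + m)
        = (∏ m ∈ Finset.range (k-1), T (t.val + 1 + m)) * T t.val := by
      have h' := Finset.prod_range_succ' (fun m => T (t.val + m)) (k-1)
      rw [show k - 1 + 1 = k from by omega] at h'
      rw [h']
      congr 1
      apply Finset.prod_congr rfl; intro m _; congr 1; omega
    rw [← hsplit, window_prod T k hT hnz, hone]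


/-! ### concatenation -/

noncomputable def cat {n : ℕ} (f g : ℕ → Fin n) (k : ℕ) : ℕ → Fin n :=
  fun m => if m < k then f m else g (m - k)

lemma cat_zero {n : ℕ} (f g : ℕ → Fin n) (k : ℕ) (hfg : f k = g 0) :
    cat f g k 0 = f 0 := by
  unfold cat
  by_cases h : 0 < k
  · rw [if_pos h]
  · rw [if_neg h]
    have : k = 0 := by omega
    subst this
    exact hfg.symm

lemma cat_last {n : ℕ} (f g : ℕ → Fin n) (k l : ℕ) :
    cat f g k (k + l) = g l := by
  unfold cat
  rw [if_neg (by omega), show k + l - k = l from by omega]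

lemma nw_cat {n : ℕ} (A : Fin n → Fin n → ℝ≥0) (f g : ℕ → Fin n) (k l : ℕ)
    (hfg : f k = g 0) :
    nw A (cat f g k) (k + l) = nw A f k * nw A g l := by
  rw [nw_add]
  congr 1
  · unfold nw
    apply Finset.prod_congr rfl
    intro m hm
    rw [Finset.mem_range] at hm
    have e1 : cat f g k m = f m := if_pos hm
    have e2 : cat f g k (m+1) = f (m+1) := by
      unfold cat
      by_cases h : m + 1 < k
      · rw [if_pos h]
      · rw [if_neg h, show m + 1 - k = 0 from by omega, ← hfg]
        congr 1
        omega
    rw [e1, e2]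
  · unfold nw
    apply Finset.prod_congr rfl
    intro m _
    have e1 : cat f g k (k + m) = g m := cat_last f g k m
    have e2 : cat f g k (k + (m + 1)) = g (m + 1) := cat_last f g k (m+1)
    simp only [cat] at e1 e2 ⊢
    rw [e1, e2]

/-! ### closed walks in a critical subgraph have weight exactly 1 -/

lemma Ewalk_nw_eq_one {n : ℕ} (A : Fin n → Fin n → ℝ≥0) (h1 : mcgm A = 1)
    (E : Fin n → Fin n → Prop) (hE : ∀ i j, E i j → IsCriticalEdge A i j) :
    ∀ (L : ℕ) (f : ℕ → Fin n), (∀ m < L, E (f m) (f (m+1))) → f 0 = f L →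
      nw A f L = 1 := by
  have rev : ∀ (L : ℕ) (f : ℕ → Fin n), (∀ m < L, E (f m) (f (m+1))) →
      ∃ (K : ℕ) (g : ℕ → Fin n), g 0 = f L ∧ g K = f 0 ∧ nw A g K * nw A f L = 1 := by
    intro L
    induction L with
    | zero => intro f _; exact ⟨0, fun _ => f 0, rfl, rfl, by simp [nw]⟩
    | succ L ih =>
      intro f hf
      obtain ⟨K, g, hg0, hgK, hgw⟩ := ih f (fun m hm => hf m (by omega))
      obtain ⟨K2, g2, hg20, hg2K, hg2w⟩ :=
        crit_complement A h1 (hE _ _ (hf L (by omega)))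
      refine ⟨K2 + K, cat g2 g K2, ?_, ?_, ?_⟩
      · rw [cat_zero g2 g K2 (by rw [hg2K, ← hg0]), hg20]
      · rw [cat_last g2 g K2 K, hgK]
      · rw [nw_cat A g2 g K2 K (by rw [hg2K, ← hg0])]
        have hfL : nw A f (L+1) = nw A f L * A (f L) (f (L+1)) := by
          unfold nw; rw [Finset.prod_range_succ]
        rw [hfL]
        calc nw A g2 K2 * nw A g K * (nw A f L * A (f L) (f (L+1)))
            = (nw A g K * nw A f L) * (nw A g2 K2 * A (f L) (f (L+1))) := by ring
          _ = 1 := by rw [hgw, hg2w, one_mul]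
  intro L f hf hcl
  obtain ⟨K, g, hg0, hgK, hgw⟩ := rev L f hf
  have hgcl : g 0 = g K := by rw [hg0, hgK, hcl]
  have h2 : nw A g K ≤ 1 := closed_nw_le_one A h1 K g hgcl
  have h3 : nw A f L ≤ 1 := closed_nw_le_one A h1 L f hcl
  have h4 : (1:ℝ≥0) ≤ nw A f L := by
    calc (1:ℝ≥0) = nw A g K * nw A f L := hgw.symm
    _ ≤ 1 * nw A f L := mul_le_mul_left h2 _
    _ = nw A f L := one_mul _
  exact le_antisymm h3 h4


/-! ### uniform bound on walk weights -/

noncomputable def Mbound {n : ℕ} (A : Fin n → Fin n → ℝ≥0) : ℝ≥0 :=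
  (1 ⊔ Finset.univ.sup (fun x : Fin n × Fin n => A x.1 x.2)) ^ n

lemma one_le_Mbound {n : ℕ} (A : Fin n → Fin n → ℝ≥0) : 1 ≤ Mbound A :=
  one_le_pow₀ le_sup_left

lemma nw_le_Mbound {n : ℕ} (A : Fin n → Fin n → ℝ≥0) (h1 : mcgm A = 1) :
    ∀ (L : ℕ) (f : ℕ → Fin n), nw A f L ≤ Mbound A := by
  intro L
  induction L using Nat.strong_induction_on with
  | _ L ih =>
    intro f
    rcases le_or_gt L n with hLn | hLn
    · have hterm : ∀ m ∈ Finset.range L, A (f m) (f (m+1)) ≤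
          1 ⊔ Finset.univ.sup (fun x : Fin n × Fin n => A x.1 x.2) := by
        intro m _
        exact le_sup_of_le_right (Finset.le_sup
          (f := fun x : Fin n × Fin n => A x.1 x.2) (Finset.mem_univ (f m, f (m+1))))
      calc nw A f L ≤ (1 ⊔ Finset.univ.sup (fun x : Fin n × Fin n => A x.1 x.2))
            ^ (Finset.range L).card :=
          Finset.prod_le_pow_card _ _ _ hterm
        _ ≤ Mbound A := by
          rw [Finset.card_range]
          exact pow_le_pow_right₀ le_sup_left hLn
    · obtain ⟨d, g, h, hd0, hdn, hg0, hgL, hh, hw⟩ := splice_s12 A L f hLn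
      have ih1 := ih (L - d) (by omega) g
      have h2 : nw A h d ≤ 1 := closed_nw_le_one A h1 d h hh
      calc nw A f L = nw A g (L - d) * nw A h d := hw
        _ ≤ Mbound A * 1 := mul_le_mul' ih1 h2
        _ = Mbound A := mul_one _

/-! ### powers of `mpow A γ` -/

lemma mpow_mpow_attain {n : ℕ} (A : Fin n → Fin n → ℝ≥0) (γ : ℕ) :
    ∀ (k : ℕ) (i j : Fin n), mpow (mpow A γ) k i j = 0 ∨
      ∃ f : ℕ → Fin n, f 0 = i ∧ f (γ * k) = j ∧
        mpow (mpow A γ) k i j = nw A f (γ * k) := by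
  intro k
  induction k with
  | zero =>
    intro i j
    by_cases h : i = j
    · subst h; right; exact ⟨fun _ => i, rfl, rfl, by simp [nw, mpow]⟩
    · left; simp [mpow, h]
  | succ k ih =>
    intro i j
    have hne : (Finset.univ : Finset (Fin n)).Nonempty := ⟨i, Finset.mem_univ i⟩
    obtain ⟨x0, _, hx0⟩ := Finset.exists_mem_eq_sup Finset.univ hne
      (fun x => mpow A γ i x * mpow (mpow A γ) k x j)
    have hk1 : mpow (mpow A γ) (k+1) i j
        = mpow A γ i x0 * mpow (mpow A γ) k x0 j := hx0
    rcases mpow_attain A γ i x0 with h0 | ⟨f1, hf10, hf1L, hf1w⟩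
    · left; rw [hk1, h0, zero_mul]
    rcases ih x0 j with h0 | ⟨f2, hf20, hf2L, hf2w⟩
    · left; rw [hk1, h0, mul_zero]
    right
    refine ⟨cat f1 f2 γ, ?_, ?_, ?_⟩
    · rw [cat_zero f1 f2 γ (by rw [hf1L, hf20]), hf10]
    · rw [show γ * (k+1) = γ + γ * k from by ring, cat_last, hf2L]
    · rw [show γ * (k+1) = γ + γ * k from by ring,
        nw_cat A f1 f2 γ (γ * k) (by rw [hf1L, hf20]), hk1, hf1w, hf2w]

lemma mpow_mpow_le_Mbound {n : ℕ} (A : Fin n → Fin n → ℝ≥0) (h1 : mcgm A = 1)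
    (γ k : ℕ) (i j : Fin n) : mpow (mpow A γ) k i j ≤ Mbound A := by
  rcases mpow_mpow_attain A γ k i j with h0 | ⟨f, _, _, hw⟩
  · rw [h0]; exact zero_le
  · rw [hw]; exact nw_le_Mbound A h1 _ f

lemma mpow_le_kleene {n : ℕ} (A : Fin n → Fin n → ℝ≥0) (h1 : mcgm A = 1)
    (γ k : ℕ) (i j : Fin n) :
    mpow (mpow A γ) k i j ≤ kleeneStar (mpow A γ) i j := by
  show _ ≤ ⨆ m : ℕ, mpow (mpow A γ) m i j
  refine le_ciSup (f := fun m : ℕ => mpow (mpow A γ) m i j) ⟨Mbound A, ?_⟩ k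
  rintro x ⟨m, rfl⟩
  exact mpow_mpow_le_Mbound A h1 γ m i j

lemma nw_le_mpow_mpow {n : ℕ} (A : Fin n → Fin n → ℝ≥0) (γ : ℕ) :
    ∀ (M : ℕ) (f : ℕ → Fin n),
      nw A f (γ * M) ≤ mpow (mpow A γ) M (f 0) (f (γ * M)) := by
  intro M
  induction M with
  | zero => intro f; simp [nw, mpow]
  | succ M ih =>
    intro f
    rw [show γ * (M+1) = γ + γ * M from by ring, nw_add]
    have h1 : nw A f γ ≤ mpow A γ (f 0) (f γ) := nw_le_mpow A γ f
    have h2 := ih (fun m => f (γ + m))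
    calc nw A f γ * nw A (fun m => f (γ + m)) (γ * M)
        ≤ mpow A γ (f 0) (f γ) * mpow (mpow A γ) M (f γ) (f (γ + γ * M)) :=
          mul_le_mul' h1 h2
      _ ≤ mpow (mpow A γ) (M+1) (f 0) (f (γ + γ * M)) := by
          exact Finset.le_sup (f := fun x => mpow A γ (f 0) x *
            mpow (mpow A γ) M x (f (γ + γ * M))) (Finset.mem_univ (f γ))

/-! ### setGcd and graphCyc positivity -/

lemma setGcd_spec (S : Set ℕ) :
    (∀ s ∈ S, setGcd S ∣ s) ∧ ∀ e : ℕ, (∀ s ∈ S, e ∣ s) → e ∣ setGcd S := by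
  have hne : {d | (∀ s ∈ S, d ∣ s) ∧ ∀ e : ℕ, (∀ s ∈ S, e ∣ s) → e ∣ d}.Nonempty := by
    obtain ⟨a, ha⟩ := Int.subgroup_cyclic (AddSubgroup.closure ((fun s : ℕ => (s:ℤ)) '' S))
    refine ⟨a.natAbs, ?_, ?_⟩
    · intro s hs
      have hmem : (s:ℤ) ∈ AddSubgroup.closure ((fun s : ℕ => (s:ℤ)) '' S) :=
        AddSubgroup.subset_closure ⟨s, hs, rfl⟩
      rw [ha, AddSubgroup.mem_closure_singleton] at hmem
      obtain ⟨m, hm⟩ := hmem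
      have hdvd : a ∣ (s:ℤ) := ⟨m, by rw [← hm, zsmul_eq_mul, Int.cast_id, mul_comm]⟩
      exact Int.ofNat_dvd.mp (Int.natAbs_dvd.mpr hdvd)
    · intro e he
      have hgen : a ∈ AddSubgroup.closure ((fun s : ℕ => (s:ℤ)) '' S) := by
        rw [ha]; exact AddSubgroup.subset_closure rfl
      have hdvd : (e:ℤ) ∣ a := by
        refine AddSubgroup.closure_induction ?_ ?_ ?_ ?_ hgen
        · rintro x ⟨s, hs, rfl⟩
          exact Int.natCast_dvd_natCast.mpr (he s hs)
        · exact dvd_zero _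
        · intro x y _ _ hx hy; exact dvd_add hx hy
        · intro x _ hx; exact (dvd_neg).mpr hx
      exact Int.natCast_dvd_natCast.mp (Int.dvd_natAbs.mpr hdvd)
  exact Nat.sInf_mem hne

lemma setGcd_pos {S : Set ℕ} (hS : S.Nonempty) (hpos : ∀ s ∈ S, 0 < s) :
    0 < setGcd S := by
  obtain ⟨s, hs⟩ := hS
  rcases Nat.eq_zero_or_pos (setGcd S) with h0 | h
  · exfalso
    have := (setGcd_spec S).1 s hs
    rw [h0] at this
    have := Nat.eq_zero_of_zero_dvd this
    exact absurd this (hpos s hs).ne'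
  · exact h

lemma graphCyc_pos {n : ℕ} (E : Fin n → Fin n → Prop) : 0 < graphCyc E := by
  apply Nat.pos_of_ne_zero
  intro h0
  unfold graphCyc at h0
  rw [Finset.lcm_eq_zero_iff] at h0
  obtain ⟨i, _, hi⟩ := h0
  change (if (cycLen E i).Nonempty then setGcd (cycLen E i) else 1) = 0 at hi
  by_cases hne : (cycLen E i).Nonempty
  · rw [if_pos hne] at hi
    exact (setGcd_pos hne (fun s hs => hs.1)).ne' hi
  · rw [if_neg hne] at hi
    exact one_ne_zero hi



lemma cat_val {n : ℕ} (f g : ℕ → Fin n) (k m : ℕ) (hfg : f k = g 0) (hm : m ≤ k) :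
    cat f g k m = f m := by
  unfold cat
  rcases lt_or_eq_of_le hm with h | rfl
  · rw [if_pos h]
  · rw [if_neg (lt_irrefl m), Nat.sub_self, ← hfg]

lemma epath_ext {n : ℕ} (E : Fin n → Fin n → Prop) (k : ℕ) (p : Fin (k+1) → Fin n)
    (hp : IsEPath E k p) : ∀ m < k, E (ext k p m) (ext k p (m+1)) := by
  intro m hm
  rw [ext_eq k p m (le_of_lt hm), ext_eq k p (m+1) hm]
  exact hp ⟨m, hm⟩

/-- a closed walk in `G.E` through any node of `N_c`. -/
lemma exists_cycle_through {n : ℕ} {A : Fin n → Fin n → ℝ≥0} (G : CritSubgraph A)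
    (c : Fin n) (hc : G.Nc c) :
    ∃ (ℓ : ℕ) (q : ℕ → Fin n), 0 < ℓ ∧ q 0 = c ∧ q ℓ = c ∧
      ∀ m < ℓ, G.E (q m) (q (m+1)) := by
  rcases hc with ⟨j0, hj0⟩ | ⟨j0, hj0⟩
  · obtain ⟨k, p', hp', h0, hl⟩ := G.reducible c j0 hj0
    have h0' : ext k p' 0 = j0 := by
      rw [ext_eq k p' 0 (Nat.zero_le k), ← h0]
      exact congrArg p' (Fin.ext (by simp))
    have hl' : ext k p' k = c := by
      rw [ext_eq k p' k le_rfl, ← hl]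
      exact congrArg p' (Fin.ext (by simp))
    set f1 : ℕ → Fin n := fun m => if m = 0 then c else j0 with hf1
    have hb : f1 1 = ext k p' 0 := by rw [h0']; simp [hf1]
    refine ⟨1 + k, cat f1 (ext k p') 1, by omega, ?_, ?_, ?_⟩
    · rw [cat_zero f1 (ext k p') 1 hb]; simp [hf1]
    · rw [cat_last f1 (ext k p') 1 k, hl']
    · intro m hm
      rcases Nat.eq_zero_or_pos m with rfl | hmpos
      · rw [cat_val f1 (ext k p') 1 0 hb (by omega),
          cat_val f1 (ext k p') 1 1 hb le_rfl]
        simpa [hf1] using hj0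
      · have e1 : cat f1 (ext k p') 1 m = ext k p' (m - 1) := by
          unfold cat; rw [if_neg (by omega)]
        have e2 : cat f1 (ext k p') 1 (m+1) = ext k p' m := by
          unfold cat; rw [if_neg (by omega), show m + 1 - 1 = m from by omega]
        rw [e1, e2, show m = (m - 1) + 1 from by omega]
        exact epath_ext G.E k p' hp' (m-1) (by omega)
  · obtain ⟨k, p', hp', h0, hl⟩ := G.reducible j0 c hj0
    have h0' : ext k p' 0 = c := by
      rw [ext_eq k p' 0 (Nat.zero_le k), ← h0]
      exact congrArg p' (Fin.ext (by simp))
    have hl' : ext k p' k = j0 := by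
      rw [ext_eq k p' k le_rfl, ← hl]
      exact congrArg p' (Fin.ext (by simp))
    set f1 : ℕ → Fin n := fun m => if m = 0 then j0 else c with hf1
    have hb : ext k p' k = f1 0 := by rw [hl']; simp [hf1]
    refine ⟨k + 1, cat (ext k p') f1 k, by omega, ?_, ?_, ?_⟩
    · rw [cat_zero (ext k p') f1 k hb, h0']
    · rw [cat_last (ext k p') f1 k 1]; simp [hf1]
    · intro m hm
      rcases lt_or_eq_of_le (by omega : m + 1 ≤ k + 1) with h | h
    -- m + 1 < k + 1, i.e. m < k
      · have e1 : cat (ext k p') f1 k m = ext k p' m :=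
          cat_val (ext k p') f1 k m hb (by omega)
        have e2 : cat (ext k p') f1 k (m+1) = ext k p' (m+1) :=
          cat_val (ext k p') f1 k (m+1) hb (by omega)
        rw [e1, e2]
        exact epath_ext G.E k p' hp' m (by omega)
      · have hmk : m = k := by omega
        have e1 : cat (ext k p') f1 k m = ext k p' k := by
          rw [hmk]; exact cat_val (ext k p') f1 k k hb le_rfl
        have e2 : cat (ext k p') f1 k (m+1) = f1 1 := by
          rw [hmk]; exact cat_last (ext k p') f1 k 1
        rw [e1, e2, hl']
        simpa [hf1] using hj0

lemma nw_smat {n : ℕ} (A : Fin n → Fin n → ℝ≥0) (G : CritSubgraph A)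
    (f : ℕ → Fin n) (L : ℕ) (hf : ∀ m < L, G.E (f m) (f (m+1))) :
    nw A f L = nw (Smat A G) f L := by
  unfold nw
  apply Finset.prod_congr rfl
  intro m hm
  rw [Finset.mem_range] at hm
  have : Smat A G (f m) (f (m+1)) = A (f m) (f (m+1)) := by
    show (if G.E (f m) (f (m+1)) then A (f m) (f (m+1)) else 0) = _
    rw [if_pos (hf m hm)]
  rw [this]


/-- the weight of any path of length `t` from `i` to `j` that
passes through a node of the critical subgraph is at most `P^(t)_{ij}`. -/
theorem heavy_path_le_csr {n : ℕ} (A : Fin n → Fin n → ℝ≥0) (h1 : mcgm A = 1)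
    (G : CritSubgraph A) (t : ℕ) (i j : Fin n)
    (p : Fin (t+1) → Fin n) (hp0 : p 0 = i) (hpl : p (Fin.last t) = j)
    (hheavy : ∃ s, G.Nc (p s)) :
    pathWeight A t p ≤ csr A G t i j := by
  classical
  obtain ⟨s, hs⟩ := hheavy
  set γ := graphCyc G.E with hγdef
  have hγpos : 0 < γ := graphCyc_pos G.E
  obtain ⟨ℓ, q, hℓ, hq0, hqℓ, hqe⟩ := exists_cycle_through G (p s) hs
  set φ : ℕ → Fin n := fun m => q (m % ℓ) with hφdef
  have hφ0 : φ 0 = p s := by simp [hφdef, Nat.zero_mod, hq0]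
  have hφp : ∀ m, φ (m + ℓ) = φ m := by
    intro m; simp [hφdef, Nat.add_mod_right]
  have keymod : ∀ m, (m + 1) % ℓ = (m % ℓ + 1) % ℓ := by
    intro m
    conv_lhs => rw [← Nat.mod_add_div m ℓ, Nat.add_right_comm]
    rw [Nat.add_mul_mod_self_left]
  have hφe : ∀ m, G.E (φ m) (φ (m+1)) := by
    intro m
    have hml : m % ℓ < ℓ := Nat.mod_lt m hℓ
    by_cases he : m % ℓ + 1 < ℓ
    · have h1' : (m+1) % ℓ = m % ℓ + 1 := by rw [keymod, Nat.mod_eq_of_lt he]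
      show G.E (q (m % ℓ)) (q ((m+1) % ℓ))
      rw [h1']; exact hqe _ hml
    · have heq : m % ℓ + 1 = ℓ := by omega
      have h1' : (m+1) % ℓ = 0 := by rw [keymod, heq, Nat.mod_self]
      show G.E (q (m % ℓ)) (q ((m+1) % ℓ))
      rw [h1']
      have := hqe (m % ℓ) hml
      rwa [heq, hqℓ, ← hq0] at this
  have hφblock : ∀ N m, φ (m + N * ℓ) = φ m := fun N m => periodic_block φ ℓ hφp N m
  have hlap : nw A φ ℓ = 1 := by
    refine Ewalk_nw_eq_one A h1 G.E G.critical ℓ φ (fun m _ => hφe m) ?_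
    have h' := hφblock 1 0
    rw [show 0 + 1 * ℓ = ℓ from by omega] at h'
    exact h'.symm
  have hNlap : ∀ N, nw A φ (N * ℓ) = 1 := by
    intro N
    induction N with
    | zero => simp [nw]
    | succ N ih =>
      rw [show (N+1) * ℓ = N * ℓ + ℓ from by ring, nw_add, ih, one_mul]
      rw [← hlap]
      unfold nw
      apply Finset.prod_congr rfl
      intro m _
      change A (φ (N * ℓ + m)) (φ (N * ℓ + (m + 1))) = A (φ m) (φ (m + 1))
      rw [show N * ℓ + m = m + N * ℓ from by omega, hφblock,
        show N * ℓ + (m + 1) = (m + 1) + N * ℓ from by omega, hφblock]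
  -- notation
  set a := s.val with hadef
  have hta : a ≤ t := by omega
  set pf : ℕ → Fin n := ext t p with hpfdef
  have hpfa : pf a = p s := by
    rw [hpfdef, ext_eq t p a hta]
  have hpf0 : pf 0 = i := by
    rw [hpfdef, ext_eq t p 0 (Nat.zero_le t), ← hp0]
    exact congrArg p (Fin.ext (by simp))
  have hpft : pf t = j := by
    rw [hpfdef, ext_eq t p t le_rfl, ← hpl]
    exact congrArg p (Fin.ext (by simp))
  set D := a * (γ - 1) with hDdef
  have haD : a + D = γ * a := by
    rw [hDdef]
    have hγ1 : γ - 1 + 1 = γ := by omega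
    calc a + a * (γ - 1) = a * (γ - 1 + 1) := by ring
    _ = γ * a := by rw [hγ1]; ring
  set X := ℓ * (t + D) with hXdef
  have hXa : a ≤ X := by
    calc a ≤ t + D := by omega
    _ ≤ ℓ * (t + D) := Nat.le_mul_of_pos_left _ hℓ
  set L0 := γ * X with hL0def
  have hDtL0 : D + t ≤ L0 := by
    calc D + t ≤ ℓ * (t + D) := by rw [Nat.mul_add]; have h1' := Nat.le_mul_of_pos_left t hℓ; have h2' := Nat.le_mul_of_pos_left D hℓ; omega
    _ ≤ γ * (ℓ * (t + D)) := Nat.le_mul_of_pos_left _ hγpos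
  set D' := L0 - (D + t) with hD'def
  have hDtD' : D + t + D' = L0 := by omega
  set M' := X - a with hM'def
  have hlen : D' + (t - a) = γ * M' := by
    have e1 : γ * M' + γ * a = γ * X := by
      rw [← Nat.mul_add, hM'def, Nat.sub_add_cancel hXa]
    have e2 : L0 = γ * X := hL0def
    have e3 : a + D = γ * a := haD
    generalize γ * M' = P at e1 ⊢
    generalize γ * a = Q at e1 e3
    generalize γ * X = Rr at e1 e2
    omega
  have hφL0 : φ L0 = p s := by
    rw [show L0 = 0 + (γ * (t + D)) * ℓ from by rw [hL0def, hXdef]; ring, hφblock, hφ0]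
  -- the three pieces
  set k0 := φ D with hk0def
  set l0 := φ (D + t) with hl0def
  have hNck0 : G.Nc k0 := Or.inl ⟨φ (D+1), hφe D⟩
  have hNcl0 : G.Nc l0 := Or.inl ⟨φ (D+t+1), hφe (D+t)⟩
  -- piece 1
  have hb1 : pf a = φ 0 := by rw [hpfa, hφ0]
  have hC : nw A pf a * nw A φ D ≤ Cmat A G i k0 := by
    have h5 := nw_le_mpow_mpow A γ a (cat pf φ a)
    rw [← haD] at h5
    rw [cat_zero pf φ a hb1, hpf0, cat_last pf φ a D] at h5
    rw [← nw_cat A pf φ a D hb1]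
    refine h5.trans ?_
    rw [Cmat, if_pos hNck0, ← hγdef]
    exact mpow_le_kleene A h1 γ a i k0
  -- piece 2
  have hS : nw A (fun m => φ (D + m)) t ≤ mpow (Smat A G) t k0 l0 := by
    rw [nw_smat A G (fun m => φ (D + m)) t (fun m _ => hφe (D + m))]
    exact nw_le_mpow (Smat A G) t (fun m => φ (D + m))
  -- piece 3
  have hb3 : (fun m => φ (D + t + m)) D' = (fun m => pf (a + m)) 0 := by
    show φ (D + t + D') = pf (a + 0)
    rw [hDtD', hφL0, Nat.add_zero, hpfa]
  have hR : nw A (fun m => φ (D + t + m)) D' * nw A (fun m => pf (a + m)) (t - a)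
      ≤ Rmat A G l0 j := by
    have h5 := nw_le_mpow_mpow A γ M' (cat (fun m => φ (D + t + m)) (fun m => pf (a + m)) D')
    rw [← hlen] at h5
    rw [cat_zero _ _ D' hb3, cat_last] at h5
    rw [← nw_cat A _ _ D' (t - a) hb3]
    refine h5.trans ?_
    have e0 : φ (D + t + 0) = l0 := by rw [Nat.add_zero]
    have e1 : pf (a + (t - a)) = j := by
      rw [show a + (t - a) = t from by omega, hpft]
    rw [e0, e1, Rmat, if_pos hNcl0, ← hγdef]
    exact mpow_le_kleene A h1 γ M' l0 j
  -- seg product is 1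
  have hsegs : nw A φ D * nw A (fun m => φ (D + m)) t
      * nw A (fun m => φ (D + t + m)) D' = 1 := by
    have e1 : nw A φ (D + (t + D')) = nw A φ D * (nw A (fun m => φ (D + m)) (t + D')) :=
      nw_add A φ D (t + D')
    have e2 : nw A (fun m => φ (D + m)) (t + D')
        = nw A (fun m => φ (D + m)) t * nw A (fun m => φ (D + (t + m))) D' :=
      nw_add A (fun m => φ (D + m)) t D'
    have e3 : nw A (fun m => φ (D + (t + m))) D' = nw A (fun m => φ (D + t + m)) D' := by
      have efun : (fun m => φ (D + (t + m))) = (fun m => φ (D + t + m)) := by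
        funext m; congr 1; omega
      rw [efun]
    have e4 : nw A φ (D + (t + D')) = 1 := by
      have eL : L0 = (γ * (t + D)) * ℓ := by rw [hL0def, hXdef]; ring
      rw [show D + (t + D') = L0 from by omega, eL]
      exact hNlap (γ * (t + D))
    rw [e1, e2, e3] at e4
    rw [← mul_assoc] at e4
    exact e4
  -- combine
  have hW : pathWeight A t p = nw A pf a * nw A (fun m => pf (a + m)) (t - a) := by
    rw [pathWeight_eq_nw, ← hpfdef, show t = a + (t - a) from by omega, nw_add]
    rw [show a + (t - a) = t from by omega]
  have hfinal : pathWeight A t p = (nw A pf a * nw A φ D)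
      * (nw A (fun m => φ (D + m)) t)
      * (nw A (fun m => φ (D + t + m)) D' * nw A (fun m => pf (a + m)) (t - a)) := by
    rw [hW]
    have : (nw A pf a * nw A φ D) * (nw A (fun m => φ (D + m)) t)
        * (nw A (fun m => φ (D + t + m)) D' * nw A (fun m => pf (a + m)) (t - a))
        = (nw A φ D * nw A (fun m => φ (D + m)) t * nw A (fun m => φ (D + t + m)) D')
          * (nw A pf a * nw A (fun m => pf (a + m)) (t - a)) := by ring
    rw [this, hsegs, one_mul]
  rw [hfinal]
  have step1 : (nw A pf a * nw A φ D) * (nw A (fun m => φ (D + m)) t)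
      * (nw A (fun m => φ (D + t + m)) D' * nw A (fun m => pf (a + m)) (t - a))
      ≤ Cmat A G i k0 * mpow (Smat A G) t k0 l0 * Rmat A G l0 j :=
    mul_le_mul' (mul_le_mul' hC hS) hR
  refine step1.trans ?_
  have step2 : Cmat A G i k0 * mpow (Smat A G) t k0 l0
      ≤ mmul (Cmat A G) (mpow (Smat A G) t) i l0 :=
    Finset.le_sup (f := fun x => Cmat A G i x * mpow (Smat A G) t x l0)
      (Finset.mem_univ k0)
  have step3 : mmul (Cmat A G) (mpow (Smat A G) t) i l0 * Rmat A G l0 j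
      ≤ csr A G t i j :=
    Finset.le_sup (f := fun x => mmul (Cmat A G) (mpow (Smat A G) t) i x * Rmat A G x j)
      (Finset.mem_univ l0)
  exact (mul_le_mul_left step2 _).trans step3


end MaxAlg
end
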